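/- arXiv:2003.08830 — 9 statements merged into one kernel-verified Lean document; each statement's English description precedes it below -/
import Mathlib

section
/- For every ω ≥ 0, H′(ω) = 0 if and only if Γ_p(ω) · Σ_{k=1}^m Δω_{zk}(ω) · Γ_z^k(ω) − Γ_z(ω) · Σ_{i=1}^n Δω_{pi}(ω) · Γ_p^i(ω) = 0; that is, the nonnegative zeros of H′ are exactly the nonnegative real roots of this polynomial in ω. -/
open Complex Real Filter Finset Set

theorem stmt_3
    (m n : ℕ) (kG : ℝ) (hkG : kG ≠ 0)
    (σz ωz : Fin m → ℝ) (σp ωp : Fin n → ℝ)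
    (σ0 : ℝ) (hσ0 : σ0 < 0)
    (hz : ∀ k, σz k ≠ σ0) (hp : ∀ i, σp i ≠ σ0)
    (G : ℂ → ℂ)
    (hG : ∀ s : ℂ, G s =
      (kG : ℂ) * (∏ k : Fin m, (s - ((σz k : ℂ) + (ωz k : ℂ) * Complex.I))) /
        (∏ i : Fin n, (s - ((σp i : ℂ) + (ωp i : ℂ) * Complex.I))))
    (γz : Fin m → ℝ → ℝ)
    (hγz : ∀ (k : Fin m) (ω : ℝ), γz k ω = (σ0 - σz k) ^ 2 + (ω - ωz k) ^ 2)
    (γp : Fin n → ℝ → ℝ)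
    (hγp : ∀ (i : Fin n) (ω : ℝ), γp i ω = (σ0 - σp i) ^ 2 + (ω - ωp i) ^ 2)
    (H : ℝ → ℝ)
    (hH : ∀ ω : ℝ, H ω = Real.log ‖G ((σ0 : ℂ) + (ω : ℂ) * Complex.I)‖ / σ0)
    : ∀ ω : ℝ, 0 ≤ ω →
      (deriv H ω = 0 ↔
        (∏ i : Fin n, γp i ω) *
            (∑ k : Fin m, (ω - ωz k) * ∏ k₁ ∈ Finset.univ.erase k, γz k₁ ω)
          - (∏ k : Fin m, γz k ω) *
            (∑ i : Fin n, (ω - ωp i) * ∏ i₁ ∈ Finset.univ.erase i, γp i₁ ω) = 0) := by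
  have hzpos : ∀ (k : Fin m) (w : ℝ), 0 < (σ0 - σz k) ^ 2 + (w - ωz k) ^ 2 := by
    intro k w
    have h : σ0 - σz k ≠ 0 := sub_ne_zero.mpr (Ne.symm (hz k))
    positivity
  have hppos : ∀ (i : Fin n) (w : ℝ), 0 < (σ0 - σp i) ^ 2 + (w - ωp i) ^ 2 := by
    intro i w
    have h : σ0 - σp i ≠ 0 := sub_ne_zero.mpr (Ne.symm (hp i))
    positivity
  have hγzpos : ∀ (k : Fin m) (w : ℝ), 0 < γz k w := fun k w => (hγz k w) ▸ hzpos k w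
  have hγppos : ∀ (i : Fin n) (w : ℝ), 0 < γp i w := fun i w => (hγp i w) ▸ hppos i w
  -- explicit formula for H
  have hHeq : H = fun w : ℝ =>
      (Real.log |kG| + (∑ k : Fin m, Real.log ((σ0 - σz k) ^ 2 + (w - ωz k) ^ 2)) / 2
        - (∑ i : Fin n, Real.log ((σ0 - σp i) ^ 2 + (w - ωp i) ^ 2)) / 2) / σ0 := by
    funext w
    have habsz : ∀ k : Fin m,
        ‖((σ0 : ℂ) + (w : ℂ) * Complex.I) - ((σz k : ℂ) + (ωz k : ℂ) * Complex.I)‖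
          = Real.sqrt ((σ0 - σz k) ^ 2 + (w - ωz k) ^ 2) := by
      intro k
      have : ((σ0 : ℂ) + (w : ℂ) * Complex.I) - ((σz k : ℂ) + (ωz k : ℂ) * Complex.I)
          = ((σ0 - σz k : ℝ) : ℂ) + ((w - ωz k : ℝ) : ℂ) * Complex.I := by
        push_cast; ring
      rw [this, Complex.norm_add_mul_I]
    have habsp : ∀ i : Fin n,
        ‖((σ0 : ℂ) + (w : ℂ) * Complex.I) - ((σp i : ℂ) + (ωp i : ℂ) * Complex.I)‖
          = Real.sqrt ((σ0 - σp i) ^ 2 + (w - ωp i) ^ 2) := by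
      intro i
      have : ((σ0 : ℂ) + (w : ℂ) * Complex.I) - ((σp i : ℂ) + (ωp i : ℂ) * Complex.I)
          = ((σ0 - σp i : ℝ) : ℂ) + ((w - ωp i : ℝ) : ℂ) * Complex.I := by
        push_cast; ring
      rw [this, Complex.norm_add_mul_I]
    have habs : ‖G ((σ0 : ℂ) + (w : ℂ) * Complex.I)‖
        = |kG| * (∏ k : Fin m, Real.sqrt ((σ0 - σz k) ^ 2 + (w - ωz k) ^ 2))
          / ∏ i : Fin n, Real.sqrt ((σ0 - σp i) ^ 2 + (w - ωp i) ^ 2) := by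
      rw [hG, norm_div, norm_mul, Complex.norm_real, Real.norm_eq_abs, norm_prod, norm_prod]
      rw [Finset.prod_congr rfl fun k _ => habsz k, Finset.prod_congr rfl fun i _ => habsp i]
    have hsz : ∀ k : Fin m, Real.sqrt ((σ0 - σz k) ^ 2 + (w - ωz k) ^ 2) ≠ 0 :=
      fun k => (Real.sqrt_pos.mpr (hzpos k w)).ne'
    have hsp : ∀ i : Fin n, Real.sqrt ((σ0 - σp i) ^ 2 + (w - ωp i) ^ 2) ≠ 0 :=
      fun i => (Real.sqrt_pos.mpr (hppos i w)).ne'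
    rw [hH, habs, Real.log_div (by
        exact mul_ne_zero (abs_ne_zero.mpr hkG) (Finset.prod_ne_zero_iff.mpr fun k _ => hsz k))
      (Finset.prod_ne_zero_iff.mpr fun i _ => hsp i),
      Real.log_mul (abs_ne_zero.mpr hkG) (Finset.prod_ne_zero_iff.mpr fun k _ => hsz k),
      Real.log_prod fun k _ => hsz k, Real.log_prod fun i _ => hsp i]
    have e1 : ∀ k : Fin m, Real.log (Real.sqrt ((σ0 - σz k) ^ 2 + (w - ωz k) ^ 2))
        = Real.log ((σ0 - σz k) ^ 2 + (w - ωz k) ^ 2) / 2 :=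
      fun k => Real.log_sqrt (hzpos k w).le
    have e2 : ∀ i : Fin n, Real.log (Real.sqrt ((σ0 - σp i) ^ 2 + (w - ωp i) ^ 2))
        = Real.log ((σ0 - σp i) ^ 2 + (w - ωp i) ^ 2) / 2 :=
      fun i => Real.log_sqrt (hppos i w).le
    simp only [e1, e2, Finset.sum_div]
  -- derivative
  intro ω hω
  have hDz : ∀ k : Fin m, HasDerivAt (fun x : ℝ => Real.log ((σ0 - σz k) ^ 2 + (x - ωz k) ^ 2))
      (2 * (ω - ωz k) / ((σ0 - σz k) ^ 2 + (ω - ωz k) ^ 2)) ω := by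
    intro k
    have h1 : HasDerivAt (fun x : ℝ => (σ0 - σz k) ^ 2 + (x - ωz k) ^ 2) (2 * (ω - ωz k)) ω := by
      have h2 := (((hasDerivAt_id ω).sub_const (ωz k)).pow 2).const_add ((σ0 - σz k) ^ 2)
      simpa using h2
    simpa using h1.log (hzpos k ω).ne'
  have hDp : ∀ i : Fin n, HasDerivAt (fun x : ℝ => Real.log ((σ0 - σp i) ^ 2 + (x - ωp i) ^ 2))
      (2 * (ω - ωp i) / ((σ0 - σp i) ^ 2 + (ω - ωp i) ^ 2)) ω := by
    intro i
    have h1 : HasDerivAt (fun x : ℝ => (σ0 - σp i) ^ 2 + (x - ωp i) ^ 2) (2 * (ω - ωp i)) ω := by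
      have h2 := (((hasDerivAt_id ω).sub_const (ωp i)).pow 2).const_add ((σ0 - σp i) ^ 2)
      simpa using h2
    simpa using h1.log (hppos i ω).ne'
  have hS1 : HasDerivAt (fun x : ℝ => ∑ k : Fin m, Real.log ((σ0 - σz k) ^ 2 + (x - ωz k) ^ 2))
      (∑ k : Fin m, 2 * (ω - ωz k) / ((σ0 - σz k) ^ 2 + (ω - ωz k) ^ 2)) ω :=
    HasDerivAt.fun_sum fun k _ => hDz k
  have hS2 : HasDerivAt (fun x : ℝ => ∑ i : Fin n, Real.log ((σ0 - σp i) ^ 2 + (x - ωp i) ^ 2))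
      (∑ i : Fin n, 2 * (ω - ωp i) / ((σ0 - σp i) ^ 2 + (ω - ωp i) ^ 2)) ω :=
    HasDerivAt.fun_sum fun i _ => hDp i
  have hF : HasDerivAt H
      ((0 + (∑ k : Fin m, 2 * (ω - ωz k) / ((σ0 - σz k) ^ 2 + (ω - ωz k) ^ 2)) / 2
        - (∑ i : Fin n, 2 * (ω - ωp i) / ((σ0 - σp i) ^ 2 + (ω - ωp i) ^ 2)) / 2) / σ0) ω := by
    rw [hHeq]
    exact (((hasDerivAt_const ω (Real.log |kG|)).add (hS1.div_const 2)).sub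
      (hS2.div_const 2)).div_const σ0
  have hderiv : deriv H ω
      = ((∑ k : Fin m, (ω - ωz k) / γz k ω) - ∑ i : Fin n, (ω - ωp i) / γp i ω) / σ0 := by
    rw [hF.deriv]
    congr 1
    rw [zero_add]
    congr 1
    · rw [Finset.sum_div]
      exact Finset.sum_congr rfl fun k _ => by rw [hγz]; ring
    · rw [Finset.sum_div]
      exact Finset.sum_congr rfl fun i _ => by rw [hγp]; ring
  -- algebraic identity
  have key : ∀ (N : ℕ) (γ : Fin N → ℝ → ℝ) (ωc : Fin N → ℝ), (∀ j, γ j ω ≠ 0) →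
      (∏ j : Fin N, γ j ω) * ∑ j : Fin N, (ω - ωc j) / γ j ω
        = ∑ j : Fin N, (ω - ωc j) * ∏ j₁ ∈ Finset.univ.erase j, γ j₁ ω := by
    intro N γ ωc hne
    rw [Finset.mul_sum]
    refine Finset.sum_congr rfl fun j _ => ?_
    rw [← Finset.mul_prod_erase Finset.univ (fun j₁ => γ j₁ ω) (Finset.mem_univ j)]
    calc (γ j ω * ∏ j₁ ∈ Finset.univ.erase j, γ j₁ ω) * ((ω - ωc j) / γ j ω)
        = ((ω - ωc j) / γ j ω * γ j ω) * ∏ j₁ ∈ Finset.univ.erase j, γ j₁ ω := by ring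
      _ = (ω - ωc j) * ∏ j₁ ∈ Finset.univ.erase j, γ j₁ ω := by
          rw [div_mul_cancel₀ _ (hne j)]
  have hiden :
      (∏ i : Fin n, γp i ω) *
          (∑ k : Fin m, (ω - ωz k) * ∏ k₁ ∈ Finset.univ.erase k, γz k₁ ω)
        - (∏ k : Fin m, γz k ω) *
          (∑ i : Fin n, (ω - ωp i) * ∏ i₁ ∈ Finset.univ.erase i, γp i₁ ω)
      = ((∏ k : Fin m, γz k ω) * ∏ i : Fin n, γp i ω) *
        ((∑ k : Fin m, (ω - ωz k) / γz k ω) - ∑ i : Fin n, (ω - ωp i) / γp i ω) := by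
    rw [← key m γz ωz fun k => (hγzpos k ω).ne', ← key n γp ωp fun i => (hγppos i ω).ne']
    ring
  have hP : ((∏ k : Fin m, γz k ω) * ∏ i : Fin n, γp i ω) ≠ 0 :=
    (mul_pos (Finset.prod_pos fun k _ => hγzpos k ω)
      (Finset.prod_pos fun i _ => hγppos i ω)).ne'
  rw [hderiv, hiden, div_eq_zero_iff, mul_eq_zero]
  simp [hσ0.ne, hP]
end

section
/- For every ω ≥ 0, φ″(ω) = 0 if and only if Γ_p(ω)² · Σ_{k=1}^m Φ_z^k(ω) · (Γ_z^k(ω))² − Γ_z(ω)² · Σ_{i=1}^n Φ_p^i(ω) · (Γ_p^i(ω))² = 0, where Φ_z^k(ω) = (2ω_{zk} − 3ω)·σ̃_{zk}² + (2ω_{zk} − ω)·Δω_{zk}(ω)² − 2σ₀·σ̃_{zk}·Δω_{zk}(ω) and Φ_p^i(ω) = (2ω_{pi} − 3ω)·σ̃_{pi}² + (2ω_{pi} − ω)·Δω_{pi}(ω)² − 2σ₀·σ̃_{pi}·Δω_{pi}(ω); that is, the nonnegative zeros of φ″ are exactly the nonnegative real roots of this polynomial in ω. -/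
open Complex Real Filter Finset Set

set_option maxHeartbeats 1000000

lemma hd_gam (c d : ℝ) (x : ℝ) :
    HasDerivAt (fun ω : ℝ => d ^ 2 + (ω - c) ^ 2) (2 * (x - c)) x := by
  have h := (((hasDerivAt_id x).sub_const c).pow 2).const_add (d ^ 2)
  simpa using h

lemma hd_arctan (c d : ℝ) (hd : d ≠ 0) (x : ℝ) :
    HasDerivAt (fun ω : ℝ => Real.arctan ((ω - c) / d)) (d / (d ^ 2 + (x - c) ^ 2)) x := by
  have h1 : HasDerivAt (fun ω : ℝ => (ω - c) / d) (1 / d) x := by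
    simpa using ((hasDerivAt_id x).sub_const c).div_const d
  have h2 := (Real.hasDerivAt_arctan ((x - c) / d)).comp x h1
  refine h2.congr_deriv ?_
  have hγ : d ^ 2 + (x - c) ^ 2 ≠ 0 := by positivity
  field_simp
  try ring

lemma hd_frac_d (c d : ℝ) (hd : d ≠ 0) (x : ℝ) :
    HasDerivAt (fun ω : ℝ => d / (d ^ 2 + (ω - c) ^ 2))
      (-(2 * d * (x - c)) / ((d ^ 2 + (x - c) ^ 2) ^ 2)) x := by
  have hγ : d ^ 2 + (x - c) ^ 2 ≠ 0 := by positivity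
  have h := (hasDerivAt_const x d).div (hd_gam c d x) hγ
  refine h.congr_deriv ?_
  field_simp
  try ring

lemma hd_log (c d : ℝ) (hd : d ≠ 0) (x : ℝ) :
    HasDerivAt (fun ω : ℝ => Real.log (d ^ 2 + (ω - c) ^ 2))
      (2 * (x - c) / (d ^ 2 + (x - c) ^ 2)) x := by
  have hγ : d ^ 2 + (x - c) ^ 2 ≠ 0 := by positivity
  have h := (Real.hasDerivAt_log hγ).comp x (hd_gam c d x)
  refine h.congr_deriv ?_
  field_simp
  try ring

lemma hd_frac_n (c d : ℝ) (hd : d ≠ 0) (x : ℝ) :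
    HasDerivAt (fun ω : ℝ => (ω - c) / (d ^ 2 + (ω - c) ^ 2))
      ((d ^ 2 - (x - c) ^ 2) / ((d ^ 2 + (x - c) ^ 2) ^ 2)) x := by
  have hγ : d ^ 2 + (x - c) ^ 2 ≠ 0 := by positivity
  have h := ((hasDerivAt_id x).sub_const c).div (hd_gam c d x) hγ
  refine h.congr_deriv ?_
  simp only [id_eq]
  field_simp
  try ring

lemma comb1 (A B K C D T U x σ0 : ℝ) :
    A - B - (1 * ((K + C / 2 - D / 2) / σ0) + x * ((2 * T / 2 - 2 * U / 2) / σ0))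
      = A - B - (K + C / 2 - D / 2) / σ0 - x * ((T - U) / σ0) := by ring

lemma comb2 (A B T U V W x σ0 : ℝ) :
    A - B - (2 * T / 2 - 2 * U / 2) / σ0 - (1 * ((T - U) / σ0) + x * ((V - W) / σ0))
      = A - B - 2 * ((T - U) / σ0) - x * ((V - W) / σ0) := by ring

lemma comb3 (S1 S2 T1 T2 U1 U2 σ0 ω : ℝ) (h : σ0 ≠ 0) :
    σ0 * (S1 - S2 - 2 * ((T1 - T2) / σ0) - ω * ((U1 - U2) / σ0))
      = σ0 * S1 - 2 * T1 - ω * U1 - (σ0 * S2 - 2 * T2 - ω * U2) := by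
  field_simp
  ring

noncomputable def phi0 {m n : ℕ} (σz ωz : Fin m → ℝ) (σp ωp : Fin n → ℝ)
    (σ0 kG : ℝ) (x : ℝ) : ℝ :=
  (∑ k, Real.arctan ((x - ωz k) / (σ0 - σz k)))
    - (∑ i, Real.arctan ((x - ωp i) / (σ0 - σp i)))
    - x * ((Real.log |kG| + (∑ k, Real.log ((σ0 - σz k) ^ 2 + (x - ωz k) ^ 2)) / 2
        - (∑ i, Real.log ((σ0 - σp i) ^ 2 + (x - ωp i) ^ 2)) / 2) / σ0)

noncomputable def phi1 {m n : ℕ} (σz ωz : Fin m → ℝ) (σp ωp : Fin n → ℝ)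
    (σ0 kG : ℝ) (x : ℝ) : ℝ :=
  (∑ k, (σ0 - σz k) / ((σ0 - σz k) ^ 2 + (x - ωz k) ^ 2))
    - (∑ i, (σ0 - σp i) / ((σ0 - σp i) ^ 2 + (x - ωp i) ^ 2))
    - ((Real.log |kG| + (∑ k, Real.log ((σ0 - σz k) ^ 2 + (x - ωz k) ^ 2)) / 2
        - (∑ i, Real.log ((σ0 - σp i) ^ 2 + (x - ωp i) ^ 2)) / 2) / σ0)
    - x * (((∑ k, (x - ωz k) / ((σ0 - σz k) ^ 2 + (x - ωz k) ^ 2))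
        - ∑ i, (x - ωp i) / ((σ0 - σp i) ^ 2 + (x - ωp i) ^ 2)) / σ0)

noncomputable def phi2 {m n : ℕ} (σz ωz : Fin m → ℝ) (σp ωp : Fin n → ℝ)
    (σ0 : ℝ) (x : ℝ) : ℝ :=
  (∑ k, -(2 * (σ0 - σz k) * (x - ωz k)) / (((σ0 - σz k) ^ 2 + (x - ωz k) ^ 2) ^ 2))
    - (∑ i, -(2 * (σ0 - σp i) * (x - ωp i)) / (((σ0 - σp i) ^ 2 + (x - ωp i) ^ 2) ^ 2))
    - 2 * (((∑ k, (x - ωz k) / ((σ0 - σz k) ^ 2 + (x - ωz k) ^ 2))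
        - ∑ i, (x - ωp i) / ((σ0 - σp i) ^ 2 + (x - ωp i) ^ 2)) / σ0)
    - x * (((∑ k, ((σ0 - σz k) ^ 2 - (x - ωz k) ^ 2) / (((σ0 - σz k) ^ 2 + (x - ωz k) ^ 2) ^ 2))
        - ∑ i, ((σ0 - σp i) ^ 2 - (x - ωp i) ^ 2) / (((σ0 - σp i) ^ 2 + (x - ωp i) ^ 2) ^ 2)) / σ0)

theorem stmt_7
    (m n : ℕ) (kG : ℝ) (hkG : kG ≠ 0)
    (σz ωz : Fin m → ℝ) (σp ωp : Fin n → ℝ)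
    (σ0 : ℝ) (hσ0 : σ0 < 0)
    (hz : ∀ k, σz k ≠ σ0) (hp : ∀ i, σp i ≠ σ0)
    (G : ℂ → ℂ)
    (hG : ∀ s : ℂ, G s =
      (kG : ℂ) * (∏ k : Fin m, (s - ((σz k : ℂ) + (ωz k : ℂ) * Complex.I))) /
        (∏ i : Fin n, (s - ((σp i : ℂ) + (ωp i : ℂ) * Complex.I))))
    (γz : Fin m → ℝ → ℝ)
    (hγz : ∀ (k : Fin m) (ω : ℝ), γz k ω = (σ0 - σz k) ^ 2 + (ω - ωz k) ^ 2)
    (γp : Fin n → ℝ → ℝ)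
    (hγp : ∀ (i : Fin n) (ω : ℝ), γp i ω = (σ0 - σp i) ^ 2 + (ω - ωp i) ^ 2)
    (H : ℝ → ℝ)
    (hH : ∀ ω : ℝ, H ω = Real.log (‖G ((σ0 : ℂ) + (ω : ℂ) * Complex.I)‖) / σ0)
    (Θ : ℝ → ℝ)
    (hΘ : ∀ ω : ℝ, Θ ω =
      (∑ k : Fin m, Real.arctan ((ω - ωz k) / (σ0 - σz k)))
        - ∑ i : Fin n, Real.arctan ((ω - ωp i) / (σ0 - σp i)))
    (φ : ℝ → ℝ) (hφ : ∀ ω : ℝ, φ ω = Θ ω - ω * H ω)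
    : ∀ ω : ℝ, 0 ≤ ω →
      (deriv (deriv φ) ω = 0 ↔
        (∏ i : Fin n, γp i ω) ^ 2 *
            (∑ k : Fin m,
              ((2 * ωz k - 3 * ω) * (σ0 - σz k) ^ 2 + (2 * ωz k - ω) * (ω - ωz k) ^ 2
                  - 2 * σ0 * (σ0 - σz k) * (ω - ωz k)) *
                (∏ k₁ ∈ Finset.univ.erase k, γz k₁ ω) ^ 2)
          - (∏ k : Fin m, γz k ω) ^ 2 *
            (∑ i : Fin n,
              ((2 * ωp i - 3 * ω) * (σ0 - σp i) ^ 2 + (2 * ωp i - ω) * (ω - ωp i) ^ 2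
                  - 2 * σ0 * (σ0 - σp i) * (ω - ωp i)) *
                (∏ i₁ ∈ Finset.univ.erase i, γp i₁ ω) ^ 2) = 0) := by
  have hσ0ne : σ0 ≠ 0 := ne_of_lt hσ0
  have hzz : ∀ k, σ0 - σz k ≠ 0 := fun k => sub_ne_zero_of_ne (Ne.symm (hz k))
  have hpp : ∀ i, σ0 - σp i ≠ 0 := fun i => sub_ne_zero_of_ne (Ne.symm (hp i))
  have hγzpos : ∀ (k : Fin m) (x : ℝ), (0:ℝ) < (σ0 - σz k) ^ 2 + (x - ωz k) ^ 2 := by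
    intro k x; have := hzz k; positivity
  have hγppos : ∀ (i : Fin n) (x : ℝ), (0:ℝ) < (σ0 - σp i) ^ 2 + (x - ωp i) ^ 2 := by
    intro i x; have := hpp i; positivity
  -- Step 1: φ = phi0
  have hkey : ∀ x : ℝ, φ x = phi0 σz ωz σp ωp σ0 kG x := by
    intro x
    have hfz : ∀ k : Fin m,
        ‖(σ0:ℂ) + (x:ℂ) * Complex.I - ((σz k : ℂ) + (ωz k : ℂ) * Complex.I)‖
          = Real.sqrt ((σ0 - σz k) ^ 2 + (x - ωz k) ^ 2) := by
      intro k
      rw [show (σ0:ℂ) + (x:ℂ) * Complex.I - ((σz k : ℂ) + (ωz k : ℂ) * Complex.I)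
          = ((σ0 - σz k : ℝ) : ℂ) + ((x - ωz k : ℝ) : ℂ) * Complex.I by push_cast; ring,
        Complex.norm_add_mul_I]
    have hfp : ∀ i : Fin n,
        ‖(σ0:ℂ) + (x:ℂ) * Complex.I - ((σp i : ℂ) + (ωp i : ℂ) * Complex.I)‖
          = Real.sqrt ((σ0 - σp i) ^ 2 + (x - ωp i) ^ 2) := by
      intro i
      rw [show (σ0:ℂ) + (x:ℂ) * Complex.I - ((σp i : ℂ) + (ωp i : ℂ) * Complex.I)
          = ((σ0 - σp i : ℝ) : ℂ) + ((x - ωp i : ℝ) : ℂ) * Complex.I by push_cast; ring,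
        Complex.norm_add_mul_I]
    have hPz : (0:ℝ) < ∏ k : Fin m, Real.sqrt ((σ0 - σz k) ^ 2 + (x - ωz k) ^ 2) :=
      Finset.prod_pos fun k _ => Real.sqrt_pos.mpr (hγzpos k x)
    have hPp : (0:ℝ) < ∏ i : Fin n, Real.sqrt ((σ0 - σp i) ^ 2 + (x - ωp i) ^ 2) :=
      Finset.prod_pos fun i _ => Real.sqrt_pos.mpr (hγppos i x)
    have habs : Real.log (‖G ((σ0:ℂ) + (x:ℂ) * Complex.I)‖)
        = Real.log |kG| + (∑ k, Real.log ((σ0 - σz k) ^ 2 + (x - ωz k) ^ 2)) / 2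
          - (∑ i, Real.log ((σ0 - σp i) ^ 2 + (x - ωp i) ^ 2)) / 2 := by
      rw [hG, norm_div, norm_mul, Complex.norm_real, Real.norm_eq_abs,
        norm_prod, norm_prod,
        Finset.prod_congr rfl (fun k _ => hfz k),
        Finset.prod_congr rfl (fun i _ => hfp i),
        Real.log_div (by positivity) (ne_of_gt hPp),
        Real.log_mul (abs_ne_zero.mpr hkG) (ne_of_gt hPz),
        Real.log_prod (fun k _ => ne_of_gt (Real.sqrt_pos.mpr (hγzpos k x))),
        Real.log_prod (fun i _ => ne_of_gt (Real.sqrt_pos.mpr (hγppos i x))),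
        Finset.sum_congr rfl (fun k _ => Real.log_sqrt (hγzpos k x).le),
        Finset.sum_congr rfl (fun i _ => Real.log_sqrt (hγppos i x).le),
        ← Finset.sum_div, ← Finset.sum_div]
      try ring
    rw [hφ, hΘ, hH, habs]
    simp only [phi0]
    try ring
  -- Step 2: first derivative
  have hd0 : ∀ x : ℝ, HasDerivAt (fun y => phi0 σz ωz σp ωp σ0 kG y)
      (phi1 σz ωz σp ωp σ0 kG x) x := by
    intro x
    have hA : HasDerivAt (fun y : ℝ => ∑ k, Real.arctan ((y - ωz k) / (σ0 - σz k)))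
        (∑ k, (σ0 - σz k) / ((σ0 - σz k) ^ 2 + (x - ωz k) ^ 2)) x :=
      HasDerivAt.fun_sum fun k _ => hd_arctan (ωz k) (σ0 - σz k) (hzz k) x
    have hB : HasDerivAt (fun y : ℝ => ∑ i, Real.arctan ((y - ωp i) / (σ0 - σp i)))
        (∑ i, (σ0 - σp i) / ((σ0 - σp i) ^ 2 + (x - ωp i) ^ 2)) x :=
      HasDerivAt.fun_sum fun i _ => hd_arctan (ωp i) (σ0 - σp i) (hpp i) x
    have hC : HasDerivAt (fun y : ℝ => (∑ k, Real.log ((σ0 - σz k) ^ 2 + (y - ωz k) ^ 2)) / 2)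
        ((∑ k, 2 * (x - ωz k) / ((σ0 - σz k) ^ 2 + (x - ωz k) ^ 2)) / 2) x :=
      (HasDerivAt.fun_sum fun k _ => hd_log (ωz k) (σ0 - σz k) (hzz k) x).div_const 2
    have hD : HasDerivAt (fun y : ℝ => (∑ i, Real.log ((σ0 - σp i) ^ 2 + (y - ωp i) ^ 2)) / 2)
        ((∑ i, 2 * (x - ωp i) / ((σ0 - σp i) ^ 2 + (x - ωp i) ^ 2)) / 2) x :=
      (HasDerivAt.fun_sum fun i _ => hd_log (ωp i) (σ0 - σp i) (hpp i) x).div_const 2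
    have hL : HasDerivAt (fun y : ℝ => (Real.log |kG|
          + (∑ k, Real.log ((σ0 - σz k) ^ 2 + (y - ωz k) ^ 2)) / 2
          - (∑ i, Real.log ((σ0 - σp i) ^ 2 + (y - ωp i) ^ 2)) / 2) / σ0)
        ((((∑ k, 2 * (x - ωz k) / ((σ0 - σz k) ^ 2 + (x - ωz k) ^ 2)) / 2)
          - ((∑ i, 2 * (x - ωp i) / ((σ0 - σp i) ^ 2 + (x - ωp i) ^ 2)) / 2)) / σ0) x := by
      have := (((hasDerivAt_const x (Real.log |kG|)).add hC).sub hD).div_const σ0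
      simpa using this
    have hM := (hasDerivAt_id x).mul hL
    have h := (hA.sub hB).sub hM
    have e1 : (∑ k, 2 * (x - ωz k) / ((σ0 - σz k) ^ 2 + (x - ωz k) ^ 2))
        = 2 * ∑ k, (x - ωz k) / ((σ0 - σz k) ^ 2 + (x - ωz k) ^ 2) := by
      rw [Finset.mul_sum]; exact Finset.sum_congr rfl fun k _ => mul_div_assoc 2 _ _
    have e2 : (∑ i, 2 * (x - ωp i) / ((σ0 - σp i) ^ 2 + (x - ωp i) ^ 2))
        = 2 * ∑ i, (x - ωp i) / ((σ0 - σp i) ^ 2 + (x - ωp i) ^ 2) := by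
      rw [Finset.mul_sum]; exact Finset.sum_congr rfl fun i _ => mul_div_assoc 2 _ _
    refine h.congr_deriv ?_
    simp only [id_eq, phi1]
    rw [e1, e2]
    exact comb1 _ _ _ _ _ _ _ _ _
  have hd1 : ∀ x : ℝ, HasDerivAt (fun y => phi1 σz ωz σp ωp σ0 kG y)
      (phi2 σz ωz σp ωp σ0 x) x := by
    intro x
    have hA : HasDerivAt (fun y : ℝ => ∑ k, (σ0 - σz k) / ((σ0 - σz k) ^ 2 + (y - ωz k) ^ 2))
        (∑ k, -(2 * (σ0 - σz k) * (x - ωz k)) / (((σ0 - σz k) ^ 2 + (x - ωz k) ^ 2) ^ 2)) x :=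
      HasDerivAt.fun_sum fun k _ => hd_frac_d (ωz k) (σ0 - σz k) (hzz k) x
    have hB : HasDerivAt (fun y : ℝ => ∑ i, (σ0 - σp i) / ((σ0 - σp i) ^ 2 + (y - ωp i) ^ 2))
        (∑ i, -(2 * (σ0 - σp i) * (x - ωp i)) / (((σ0 - σp i) ^ 2 + (x - ωp i) ^ 2) ^ 2)) x :=
      HasDerivAt.fun_sum fun i _ => hd_frac_d (ωp i) (σ0 - σp i) (hpp i) x
    have hC : HasDerivAt (fun y : ℝ => (∑ k, Real.log ((σ0 - σz k) ^ 2 + (y - ωz k) ^ 2)) / 2)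
        ((∑ k, 2 * (x - ωz k) / ((σ0 - σz k) ^ 2 + (x - ωz k) ^ 2)) / 2) x :=
      (HasDerivAt.fun_sum fun k _ => hd_log (ωz k) (σ0 - σz k) (hzz k) x).div_const 2
    have hD : HasDerivAt (fun y : ℝ => (∑ i, Real.log ((σ0 - σp i) ^ 2 + (y - ωp i) ^ 2)) / 2)
        ((∑ i, 2 * (x - ωp i) / ((σ0 - σp i) ^ 2 + (x - ωp i) ^ 2)) / 2) x :=
      (HasDerivAt.fun_sum fun i _ => hd_log (ωp i) (σ0 - σp i) (hpp i) x).div_const 2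
    have hL : HasDerivAt (fun y : ℝ => (Real.log |kG|
          + (∑ k, Real.log ((σ0 - σz k) ^ 2 + (y - ωz k) ^ 2)) / 2
          - (∑ i, Real.log ((σ0 - σp i) ^ 2 + (y - ωp i) ^ 2)) / 2) / σ0)
        ((((∑ k, 2 * (x - ωz k) / ((σ0 - σz k) ^ 2 + (x - ωz k) ^ 2)) / 2)
          - ((∑ i, 2 * (x - ωp i) / ((σ0 - σp i) ^ 2 + (x - ωp i) ^ 2)) / 2)) / σ0) x := by
      have := (((hasDerivAt_const x (Real.log |kG|)).add hC).sub hD).div_const σ0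
      simpa using this
    have hT : HasDerivAt (fun y : ℝ =>
          ((∑ k, (y - ωz k) / ((σ0 - σz k) ^ 2 + (y - ωz k) ^ 2))
            - ∑ i, (y - ωp i) / ((σ0 - σp i) ^ 2 + (y - ωp i) ^ 2)) / σ0)
        (((∑ k, ((σ0 - σz k) ^ 2 - (x - ωz k) ^ 2) / (((σ0 - σz k) ^ 2 + (x - ωz k) ^ 2) ^ 2))
          - ∑ i, ((σ0 - σp i) ^ 2 - (x - ωp i) ^ 2) / (((σ0 - σp i) ^ 2 + (x - ωp i) ^ 2) ^ 2)) / σ0) x := by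
      exact ((HasDerivAt.fun_sum fun k _ => hd_frac_n (ωz k) (σ0 - σz k) (hzz k) x).sub
        (HasDerivAt.fun_sum fun i _ => hd_frac_n (ωp i) (σ0 - σp i) (hpp i) x)).div_const σ0
    have hM := (hasDerivAt_id x).mul hT
    have h := ((hA.sub hB).sub hL).sub hM
    have e1 : (∑ k, 2 * (x - ωz k) / ((σ0 - σz k) ^ 2 + (x - ωz k) ^ 2))
        = 2 * ∑ k, (x - ωz k) / ((σ0 - σz k) ^ 2 + (x - ωz k) ^ 2) := by
      rw [Finset.mul_sum]; exact Finset.sum_congr rfl fun k _ => mul_div_assoc 2 _ _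
    have e2 : (∑ i, 2 * (x - ωp i) / ((σ0 - σp i) ^ 2 + (x - ωp i) ^ 2))
        = 2 * ∑ i, (x - ωp i) / ((σ0 - σp i) ^ 2 + (x - ωp i) ^ 2) := by
      rw [Finset.mul_sum]; exact Finset.sum_congr rfl fun i _ => mul_div_assoc 2 _ _
    refine h.congr_deriv ?_
    simp only [id_eq, phi2]
    rw [e1, e2]
    exact comb2 _ _ _ _ _ _ _ _
  have hφeq : φ = fun y => phi0 σz ωz σp ωp σ0 kG y := funext hkey
  have hder1 : deriv φ = fun y => phi1 σz ωz σp ωp σ0 kG y := by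
    funext y
    rw [hφeq]
    exact (hd0 y).deriv
  intro ω hω
  have hder2 : deriv (deriv φ) ω = phi2 σz ωz σp ωp σ0 ω := by
    rw [hder1]
    exact (hd1 ω).deriv
  rw [hder2]
  simp only [hγz, hγp]
  -- algebra
  have hγzo : ∀ k : Fin m, ((σ0 - σz k) ^ 2 + (ω - ωz k) ^ 2) ≠ 0 := fun k => (hγzpos k ω).ne'
  have hγpo : ∀ i : Fin n, ((σ0 - σp i) ^ 2 + (ω - ωp i) ^ 2) ≠ 0 := fun i => (hγppos i ω).ne'
  have hΓz : (∏ k : Fin m, ((σ0 - σz k) ^ 2 + (ω - ωz k) ^ 2)) ≠ 0 :=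
    Finset.prod_ne_zero_iff.mpr fun k _ => hγzo k
  have hΓp : (∏ i : Fin n, ((σ0 - σp i) ^ 2 + (ω - ωp i) ^ 2)) ≠ 0 :=
    Finset.prod_ne_zero_iff.mpr fun i _ => hγpo i
  have hz1 : ∀ k : Fin m,
      σ0 * (-(2 * (σ0 - σz k) * (ω - ωz k)) / (((σ0 - σz k) ^ 2 + (ω - ωz k) ^ 2) ^ 2))
        - 2 * ((ω - ωz k) / ((σ0 - σz k) ^ 2 + (ω - ωz k) ^ 2))
        - ω * (((σ0 - σz k) ^ 2 - (ω - ωz k) ^ 2) / (((σ0 - σz k) ^ 2 + (ω - ωz k) ^ 2) ^ 2))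
      = ((2 * ωz k - 3 * ω) * (σ0 - σz k) ^ 2 + (2 * ωz k - ω) * (ω - ωz k) ^ 2
          - 2 * σ0 * (σ0 - σz k) * (ω - ωz k)) / (((σ0 - σz k) ^ 2 + (ω - ωz k) ^ 2) ^ 2) := by
    intro k
    have := hγzo k
    field_simp
    ring
  have hp1 : ∀ i : Fin n,
      σ0 * (-(2 * (σ0 - σp i) * (ω - ωp i)) / (((σ0 - σp i) ^ 2 + (ω - ωp i) ^ 2) ^ 2))
        - 2 * ((ω - ωp i) / ((σ0 - σp i) ^ 2 + (ω - ωp i) ^ 2))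
        - ω * (((σ0 - σp i) ^ 2 - (ω - ωp i) ^ 2) / (((σ0 - σp i) ^ 2 + (ω - ωp i) ^ 2) ^ 2))
      = ((2 * ωp i - 3 * ω) * (σ0 - σp i) ^ 2 + (2 * ωp i - ω) * (ω - ωp i) ^ 2
          - 2 * σ0 * (σ0 - σp i) * (ω - ωp i)) / (((σ0 - σp i) ^ 2 + (ω - ωp i) ^ 2) ^ 2) := by
    intro i
    have := hγpo i
    field_simp
    ring
  have hE : σ0 * phi2 σz ωz σp ωp σ0 ω
      = (∑ k, ((2 * ωz k - 3 * ω) * (σ0 - σz k) ^ 2 + (2 * ωz k - ω) * (ω - ωz k) ^ 2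
          - 2 * σ0 * (σ0 - σz k) * (ω - ωz k)) / (((σ0 - σz k) ^ 2 + (ω - ωz k) ^ 2) ^ 2))
        - ∑ i, ((2 * ωp i - 3 * ω) * (σ0 - σp i) ^ 2 + (2 * ωp i - ω) * (ω - ωp i) ^ 2
          - 2 * σ0 * (σ0 - σp i) * (ω - ωp i)) / (((σ0 - σp i) ^ 2 + (ω - ωp i) ^ 2) ^ 2) := by
    rw [← Finset.sum_congr rfl fun k _ => hz1 k, ← Finset.sum_congr rfl fun i _ => hp1 i]
    simp only [Finset.sum_sub_distrib]
    simp only [← Finset.mul_sum]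
    simp only [phi2]
    exact comb3 _ _ _ _ _ _ _ _ hσ0ne
  have hzterm : ∀ k : Fin m,
      ((∏ k₁ : Fin m, ((σ0 - σz k₁) ^ 2 + (ω - ωz k₁) ^ 2)) ^ 2
          * (∏ i : Fin n, ((σ0 - σp i) ^ 2 + (ω - ωp i) ^ 2)) ^ 2)
        * (((2 * ωz k - 3 * ω) * (σ0 - σz k) ^ 2 + (2 * ωz k - ω) * (ω - ωz k) ^ 2
          - 2 * σ0 * (σ0 - σz k) * (ω - ωz k)) / (((σ0 - σz k) ^ 2 + (ω - ωz k) ^ 2) ^ 2))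
      = (∏ i : Fin n, ((σ0 - σp i) ^ 2 + (ω - ωp i) ^ 2)) ^ 2
        * (((2 * ωz k - 3 * ω) * (σ0 - σz k) ^ 2 + (2 * ωz k - ω) * (ω - ωz k) ^ 2
            - 2 * σ0 * (σ0 - σz k) * (ω - ωz k))
          * (∏ k₁ ∈ Finset.univ.erase k, ((σ0 - σz k₁) ^ 2 + (ω - ωz k₁) ^ 2)) ^ 2) := by
    intro k
    rw [← Finset.mul_prod_erase Finset.univ _ (Finset.mem_univ k)]
    have := hγzo k
    field_simp
  have hpterm : ∀ i : Fin n,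
      ((∏ k : Fin m, ((σ0 - σz k) ^ 2 + (ω - ωz k) ^ 2)) ^ 2
          * (∏ i₁ : Fin n, ((σ0 - σp i₁) ^ 2 + (ω - ωp i₁) ^ 2)) ^ 2)
        * (((2 * ωp i - 3 * ω) * (σ0 - σp i) ^ 2 + (2 * ωp i - ω) * (ω - ωp i) ^ 2
          - 2 * σ0 * (σ0 - σp i) * (ω - ωp i)) / (((σ0 - σp i) ^ 2 + (ω - ωp i) ^ 2) ^ 2))
      = (∏ k : Fin m, ((σ0 - σz k) ^ 2 + (ω - ωz k) ^ 2)) ^ 2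
        * (((2 * ωp i - 3 * ω) * (σ0 - σp i) ^ 2 + (2 * ωp i - ω) * (ω - ωp i) ^ 2
            - 2 * σ0 * (σ0 - σp i) * (ω - ωp i))
          * (∏ i₁ ∈ Finset.univ.erase i, ((σ0 - σp i₁) ^ 2 + (ω - ωp i₁) ^ 2)) ^ 2) := by
    intro i
    rw [← Finset.mul_prod_erase Finset.univ
      (fun i₁ => (σ0 - σp i₁) ^ 2 + (ω - ωp i₁) ^ 2) (Finset.mem_univ i)]
    have := hγpo i
    field_simp
  have hfact :
      ((∏ k : Fin m, ((σ0 - σz k) ^ 2 + (ω - ωz k) ^ 2)) ^ 2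
          * (∏ i : Fin n, ((σ0 - σp i) ^ 2 + (ω - ωp i) ^ 2)) ^ 2)
        * (σ0 * phi2 σz ωz σp ωp σ0 ω)
      = (∏ i : Fin n, ((σ0 - σp i) ^ 2 + (ω - ωp i) ^ 2)) ^ 2 *
            (∑ k : Fin m,
              ((2 * ωz k - 3 * ω) * (σ0 - σz k) ^ 2 + (2 * ωz k - ω) * (ω - ωz k) ^ 2
                  - 2 * σ0 * (σ0 - σz k) * (ω - ωz k)) *
                (∏ k₁ ∈ Finset.univ.erase k, ((σ0 - σz k₁) ^ 2 + (ω - ωz k₁) ^ 2)) ^ 2)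
          - (∏ k : Fin m, ((σ0 - σz k) ^ 2 + (ω - ωz k) ^ 2)) ^ 2 *
            (∑ i : Fin n,
              ((2 * ωp i - 3 * ω) * (σ0 - σp i) ^ 2 + (2 * ωp i - ω) * (ω - ωp i) ^ 2
                  - 2 * σ0 * (σ0 - σp i) * (ω - ωp i)) *
                (∏ i₁ ∈ Finset.univ.erase i, ((σ0 - σp i₁) ^ 2 + (ω - ωp i₁) ^ 2)) ^ 2) := by
    rw [hE, mul_sub, Finset.mul_sum, Finset.mul_sum,
      Finset.sum_congr rfl fun k _ => hzterm k,
      Finset.sum_congr rfl fun i _ => hpterm i,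
      ← Finset.mul_sum, ← Finset.mul_sum]
  constructor
  · intro h
    rw [← hfact, h, mul_zero, mul_zero]
  · intro h
    rw [← hfact] at h
    have h1 : σ0 * phi2 σz ωz σp ωp σ0 ω = 0 := by
      rcases mul_eq_zero.mp h with h' | h'
      · exact absurd h' (mul_ne_zero (pow_ne_zero 2 hΓz) (pow_ne_zero 2 hΓp))
      · exact h'
    rcases mul_eq_zero.mp h1 with h' | h'
    · exact absurd h' hσ0ne
    · exact h'
end

section
/- For every real ω, the logarithmic derivative of G at s = σ₀ + iω satisfies G′(σ₀ + iω)/G(σ₀ + iω) = ( φ′(ω) + H(ω) + ω·H′(ω) ) − i·σ₀·H′(ω); equivalently, Σ_{k=1}^m 1/(σ₀ + iω − z_k) − Σ_{i=1}^n 1/(σ₀ + iω − p_i) equals this complex number. -/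
open Complex Real Filter Finset Set

private lemma aux_arctan (a b x : ℝ) (ha : a ≠ 0) :
    HasDerivAt (fun ω => Real.arctan ((ω - b) / a)) (a / (a ^ 2 + (x - b) ^ 2)) x := by
  have h1 : HasDerivAt (fun ω : ℝ => (ω - b) / a) (1 / a) x := by
    simpa using ((hasDerivAt_id x).sub_const b).div_const a
  have h2 := (Real.hasDerivAt_arctan ((x - b) / a)).comp x h1
  refine h2.congr_deriv ?_
  have h3 : 1 + ((x - b) / a) ^ 2 ≠ 0 := by positivity
  have h4 : a ^ 2 + (x - b) ^ 2 ≠ 0 := by positivity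
  field_simp

private lemma aux_halflog (a b x : ℝ) (ha : a ≠ 0) :
    HasDerivAt (fun ω => Real.log (a ^ 2 + (ω - b) ^ 2) / 2)
      ((x - b) / (a ^ 2 + (x - b) ^ 2)) x := by
  have hpos : (0:ℝ) < a ^ 2 + (x - b) ^ 2 := by positivity
  have h1 : HasDerivAt (fun ω : ℝ => a ^ 2 + (ω - b) ^ 2) (2 * (x - b)) x := by
    have h := (((hasDerivAt_id x).sub_const b).pow 2).const_add (a ^ 2)
    simpa [mul_comm] using h
  have h2 := ((Real.hasDerivAt_log hpos.ne').comp x h1).div_const 2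
  refine h2.congr_deriv ?_
  field_simp

private lemma aux_inv (x y : ℝ) (hx : x ≠ 0) :
    1 / ((x:ℂ) + (y:ℂ) * Complex.I) =
      ((x / (x ^ 2 + y ^ 2) : ℝ) : ℂ) - ((y / (x ^ 2 + y ^ 2) : ℝ) : ℂ) * Complex.I := by
  have hE : x ^ 2 + y ^ 2 ≠ 0 := by positivity
  have hne : ((x:ℂ) + (y:ℂ) * Complex.I) ≠ 0 := by
    simp only [ne_eq, Complex.ext_iff, Complex.add_re, Complex.ofReal_re, Complex.mul_re,
      Complex.I_re, Complex.I_im, Complex.ofReal_im, Complex.add_im, Complex.mul_im,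
      Complex.zero_re, Complex.zero_im]
    intro ⟨h1, h2⟩
    apply hx; linarith
  rw [div_eq_iff hne]
  push_cast
  have hE' : ((x:ℂ) ^ 2 + (y:ℂ) ^ 2) ≠ 0 := by exact_mod_cast hE
  field_simp
  linear_combination ((y:ℂ)^2) * Complex.I_sq

private lemma aux_abs (c x a b : ℝ) :
    ‖(((c:ℂ) + (x:ℂ) * Complex.I) - ((a:ℂ) + (b:ℂ) * Complex.I))‖ =
      Real.sqrt ((c - a) ^ 2 + (x - b) ^ 2) := by
  rw [Complex.norm_def]
  congr 1
  rw [Complex.normSq_apply]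
  simp [Complex.sub_re, Complex.sub_im, Complex.add_re, Complex.add_im, Complex.mul_re,
    Complex.mul_im]
  ring

theorem stmt_9
    (m n : ℕ) (kG : ℝ) (hkG : kG ≠ 0)
    (σz ωz : Fin m → ℝ) (σp ωp : Fin n → ℝ)
    (σ0 : ℝ) (hσ0 : σ0 < 0)
    (hz : ∀ k, σz k ≠ σ0) (hp : ∀ i, σp i ≠ σ0)
    (G : ℂ → ℂ)
    (hG : ∀ s : ℂ, G s =
      (kG : ℂ) * (∏ k : Fin m, (s - ((σz k : ℂ) + (ωz k : ℂ) * Complex.I))) /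
        (∏ i : Fin n, (s - ((σp i : ℂ) + (ωp i : ℂ) * Complex.I))))
    (γz : Fin m → ℝ → ℝ)
    (hγz : ∀ (k : Fin m) (ω : ℝ), γz k ω = (σ0 - σz k) ^ 2 + (ω - ωz k) ^ 2)
    (γp : Fin n → ℝ → ℝ)
    (hγp : ∀ (i : Fin n) (ω : ℝ), γp i ω = (σ0 - σp i) ^ 2 + (ω - ωp i) ^ 2)
    (H : ℝ → ℝ)
    (hH : ∀ ω : ℝ, H ω = Real.log ‖G ((σ0 : ℂ) + (ω : ℂ) * Complex.I)‖ / σ0)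
    (Θ : ℝ → ℝ)
    (hΘ : ∀ ω : ℝ, Θ ω =
      (∑ k : Fin m, Real.arctan ((ω - ωz k) / (σ0 - σz k)))
        - ∑ i : Fin n, Real.arctan ((ω - ωp i) / (σ0 - σp i)))
    (φ : ℝ → ℝ) (hφ : ∀ ω : ℝ, φ ω = Θ ω - ω * H ω)
    : ∀ ω : ℝ,
      deriv G ((σ0 : ℂ) + (ω : ℂ) * Complex.I) / G ((σ0 : ℂ) + (ω : ℂ) * Complex.I) =
        (((deriv φ ω + H ω + ω * deriv H ω : ℝ) : ℂ)
          - Complex.I * (σ0 : ℂ) * ((deriv H ω : ℝ) : ℂ)) ∧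
      (∑ k : Fin m, 1 / ((σ0 : ℂ) + (ω : ℂ) * Complex.I - ((σz k : ℂ) + (ωz k : ℂ) * Complex.I)))
        - (∑ i : Fin n, 1 / ((σ0 : ℂ) + (ω : ℂ) * Complex.I - ((σp i : ℂ) + (ωp i : ℂ) * Complex.I))) =
        (((deriv φ ω + H ω + ω * deriv H ω : ℝ) : ℂ)
          - Complex.I * (σ0 : ℂ) * ((deriv H ω : ℝ) : ℂ)) := by
  intro ω
  have hσ0ne : σ0 ≠ 0 := hσ0.ne
  have hkG' : (kG : ℂ) ≠ 0 := Complex.ofReal_ne_zero.mpr hkG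
  have haz : ∀ k : Fin m, σ0 - σz k ≠ 0 := fun k => sub_ne_zero.mpr (Ne.symm (hz k))
  have hap : ∀ i : Fin n, σ0 - σp i ≠ 0 := fun i => sub_ne_zero.mpr (Ne.symm (hp i))
  have hEz : ∀ (k : Fin m) (x : ℝ), (0:ℝ) < (σ0 - σz k) ^ 2 + (x - ωz k) ^ 2 := fun k x =>
    add_pos_of_pos_of_nonneg (sq_pos_of_ne_zero (haz k)) (sq_nonneg _)
  have hEp : ∀ (i : Fin n) (x : ℝ), (0:ℝ) < (σ0 - σp i) ^ 2 + (x - ωp i) ^ 2 := fun i x =>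
    add_pos_of_pos_of_nonneg (sq_pos_of_ne_zero (hap i)) (sq_nonneg _)
  -- complex factors nonzero
  have hzs : ∀ k : Fin m,
      ((σ0:ℂ) + (ω:ℂ) * Complex.I) - ((σz k:ℂ) + (ωz k:ℂ) * Complex.I) ≠ 0 := by
    intro k h
    apply haz k
    have := congrArg Complex.re h
    simpa using this
  have hps : ∀ i : Fin n,
      ((σ0:ℂ) + (ω:ℂ) * Complex.I) - ((σp i:ℂ) + (ωp i:ℂ) * Complex.I) ≠ 0 := by
    intro i h
    apply hap i
    have := congrArg Complex.re h
    simpa using this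
  -- explicit formula for H
  have hHfun : H = fun x =>
      ((Real.log |kG| + ∑ k : Fin m, Real.log ((σ0 - σz k) ^ 2 + (x - ωz k) ^ 2) / 2)
        - ∑ i : Fin n, Real.log ((σ0 - σp i) ^ 2 + (x - ωp i) ^ 2) / 2) / σ0 := by
    funext x
    have h1 : ∀ k : Fin m, Real.sqrt ((σ0 - σz k) ^ 2 + (x - ωz k) ^ 2) ≠ 0 :=
      fun k => (Real.sqrt_pos.mpr (hEz k x)).ne'
    have h2 : ∀ i : Fin n, Real.sqrt ((σ0 - σp i) ^ 2 + (x - ωp i) ^ 2) ≠ 0 :=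
      fun i => (Real.sqrt_pos.mpr (hEp i x)).ne'
    rw [hH, hG, norm_div, norm_mul, Complex.norm_real, Real.norm_eq_abs, norm_prod, norm_prod]
    rw [Finset.prod_congr rfl (fun k _ => aux_abs σ0 x (σz k) (ωz k)),
        Finset.prod_congr rfl (fun i _ => aux_abs σ0 x (σp i) (ωp i))]
    rw [Real.log_div (mul_ne_zero (abs_ne_zero.mpr hkG)
          (Finset.prod_ne_zero_iff.mpr fun k _ => h1 k))
        (Finset.prod_ne_zero_iff.mpr fun i _ => h2 i),
        Real.log_mul (abs_ne_zero.mpr hkG) (Finset.prod_ne_zero_iff.mpr fun k _ => h1 k),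
        Real.log_prod (fun k _ => h1 k), Real.log_prod (fun i _ => h2 i)]
    congr 2
    · congr 1
      exact Finset.sum_congr rfl fun k _ => Real.log_sqrt (hEz k x).le
    · exact Finset.sum_congr rfl fun i _ => Real.log_sqrt (hEp i x).le
  -- derivative data
  have hDH : HasDerivAt H
      (((∑ k : Fin m, (ω - ωz k) / ((σ0 - σz k) ^ 2 + (ω - ωz k) ^ 2))
        - ∑ i : Fin n, (ω - ωp i) / ((σ0 - σp i) ^ 2 + (ω - ωp i) ^ 2)) / σ0) ω := by
    rw [hHfun]
    exact (((HasDerivAt.fun_sum fun k _ => aux_halflog (σ0 - σz k) (ωz k) ω (haz k)).const_add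
      (Real.log |kG|)).sub
      (HasDerivAt.fun_sum fun i _ => aux_halflog (σ0 - σp i) (ωp i) ω (hap i))).div_const σ0
  have hDΘ : HasDerivAt Θ
      ((∑ k : Fin m, (σ0 - σz k) / ((σ0 - σz k) ^ 2 + (ω - ωz k) ^ 2))
        - ∑ i : Fin n, (σ0 - σp i) / ((σ0 - σp i) ^ 2 + (ω - ωp i) ^ 2)) ω := by
    have hΘfun : Θ = fun x =>
        (∑ k : Fin m, Real.arctan ((x - ωz k) / (σ0 - σz k)))
          - ∑ i : Fin n, Real.arctan ((x - ωp i) / (σ0 - σp i)) := funext hΘ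
    rw [hΘfun]
    exact (HasDerivAt.fun_sum fun k _ => aux_arctan (σ0 - σz k) (ωz k) ω (haz k)).sub
      (HasDerivAt.fun_sum fun i _ => aux_arctan (σ0 - σp i) (ωp i) ω (hap i))
  have hDφ : HasDerivAt φ
      (((∑ k : Fin m, (σ0 - σz k) / ((σ0 - σz k) ^ 2 + (ω - ωz k) ^ 2))
        - ∑ i : Fin n, (σ0 - σp i) / ((σ0 - σp i) ^ 2 + (ω - ωp i) ^ 2))
       - (1 * H ω + ω * (((∑ k : Fin m, (ω - ωz k) / ((σ0 - σz k) ^ 2 + (ω - ωz k) ^ 2))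
        - ∑ i : Fin n, (ω - ωp i) / ((σ0 - σp i) ^ 2 + (ω - ωp i) ^ 2)) / σ0))) ω := by
    have hφfun : φ = fun x => Θ x - x * H x := funext hφ
    rw [hφfun]
    exact hDΘ.sub ((hasDerivAt_id ω).mul hDH)
  -- abbreviations
  set DΘ : ℝ := (∑ k : Fin m, (σ0 - σz k) / ((σ0 - σz k) ^ 2 + (ω - ωz k) ^ 2))
      - ∑ i : Fin n, (σ0 - σp i) / ((σ0 - σp i) ^ 2 + (ω - ωp i) ^ 2) with hDΘdef
  set Y : ℝ := (∑ k : Fin m, (ω - ωz k) / ((σ0 - σz k) ^ 2 + (ω - ωz k) ^ 2))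
      - ∑ i : Fin n, (ω - ωp i) / ((σ0 - σp i) ^ 2 + (ω - ωp i) ^ 2) with hYdef
  have e1 : deriv H ω = Y / σ0 := hDH.deriv
  have e2 : deriv φ ω = DΘ - (1 * H ω + ω * (Y / σ0)) := hDφ.deriv
  -- the right-hand side simplifies
  have key : (((deriv φ ω + H ω + ω * deriv H ω : ℝ) : ℂ)
      - Complex.I * (σ0 : ℂ) * ((deriv H ω : ℝ) : ℂ)) = (DΘ : ℂ) - Complex.I * (Y : ℂ) := by
    rw [e1, e2]
    push_cast
    have hσ0c : (σ0 : ℂ) ≠ 0 := Complex.ofReal_ne_zero.mpr hσ0ne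
    field_simp
    ring
  -- second conjunct
  have hterm_z : ∀ k : Fin m,
      1 / ((σ0:ℂ) + (ω:ℂ) * Complex.I - ((σz k:ℂ) + (ωz k:ℂ) * Complex.I)) =
        (((σ0 - σz k) / ((σ0 - σz k) ^ 2 + (ω - ωz k) ^ 2) : ℝ) : ℂ)
          - (((ω - ωz k) / ((σ0 - σz k) ^ 2 + (ω - ωz k) ^ 2) : ℝ) : ℂ) * Complex.I := by
    intro k
    rw [show ((σ0:ℂ) + (ω:ℂ) * Complex.I - ((σz k:ℂ) + (ωz k:ℂ) * Complex.I)) =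
        (((σ0 - σz k : ℝ):ℂ) + ((ω - ωz k : ℝ):ℂ) * Complex.I) by push_cast; ring]
    exact aux_inv _ _ (haz k)
  have hterm_p : ∀ i : Fin n,
      1 / ((σ0:ℂ) + (ω:ℂ) * Complex.I - ((σp i:ℂ) + (ωp i:ℂ) * Complex.I)) =
        (((σ0 - σp i) / ((σ0 - σp i) ^ 2 + (ω - ωp i) ^ 2) : ℝ) : ℂ)
          - (((ω - ωp i) / ((σ0 - σp i) ^ 2 + (ω - ωp i) ^ 2) : ℝ) : ℂ) * Complex.I := by
    intro i
    rw [show ((σ0:ℂ) + (ω:ℂ) * Complex.I - ((σp i:ℂ) + (ωp i:ℂ) * Complex.I)) =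
        (((σ0 - σp i : ℝ):ℂ) + ((ω - ωp i : ℝ):ℂ) * Complex.I) by push_cast; ring]
    exact aux_inv _ _ (hap i)
  have conj2 : (∑ k : Fin m, 1 / ((σ0 : ℂ) + (ω : ℂ) * Complex.I
        - ((σz k : ℂ) + (ωz k : ℂ) * Complex.I)))
      - (∑ i : Fin n, 1 / ((σ0 : ℂ) + (ω : ℂ) * Complex.I
        - ((σp i : ℂ) + (ωp i : ℂ) * Complex.I))) = (DΘ : ℂ) - Complex.I * (Y : ℂ) := by
    rw [Finset.sum_congr rfl (fun k _ => hterm_z k),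
        Finset.sum_congr rfl (fun i _ => hterm_p i)]
    simp only [Finset.sum_sub_distrib, ← Finset.sum_mul, hDΘdef, hYdef]
    push_cast
    ring
  refine ⟨?_, key ▸ conj2⟩
  -- first conjunct: compute the derivative of G
  rw [key]
  rw [← conj2]
  set s : ℂ := (σ0:ℂ) + (ω:ℂ) * Complex.I with hsdef
  have hGfun : G = fun t => (kG : ℂ) * (∏ k : Fin m, (t - ((σz k:ℂ) + (ωz k:ℂ) * Complex.I))) /
      ∏ i : Fin n, (t - ((σp i:ℂ) + (ωp i:ℂ) * Complex.I)) := funext hG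
  have hPs : (∏ k : Fin m, (s - ((σz k:ℂ) + (ωz k:ℂ) * Complex.I))) ≠ 0 :=
    Finset.prod_ne_zero_iff.mpr fun k _ => hzs k
  have hQs : (∏ i : Fin n, (s - ((σp i:ℂ) + (ωp i:ℂ) * Complex.I))) ≠ 0 :=
    Finset.prod_ne_zero_iff.mpr fun i _ => hps i
  have hPd : HasDerivAt (fun t => ∏ k : Fin m, (t - ((σz k:ℂ) + (ωz k:ℂ) * Complex.I)))
      (∑ k : Fin m, ∏ j ∈ Finset.univ.erase k, (s - ((σz j:ℂ) + (ωz j:ℂ) * Complex.I))) s := by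
    have h := HasDerivAt.fun_finsetProd (u := (Finset.univ : Finset (Fin m)))
      (f := fun k t => t - ((σz k:ℂ) + (ωz k:ℂ) * Complex.I)) (f' := fun _ => (1:ℂ)) (x := s)
      (fun k _ => (hasDerivAt_id s).sub_const _)
    simpa using h
  have hQd : HasDerivAt (fun t => ∏ i : Fin n, (t - ((σp i:ℂ) + (ωp i:ℂ) * Complex.I)))
      (∑ i : Fin n, ∏ j ∈ Finset.univ.erase i, (s - ((σp j:ℂ) + (ωp j:ℂ) * Complex.I))) s := by
    have h := HasDerivAt.fun_finsetProd (u := (Finset.univ : Finset (Fin n)))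
      (f := fun i t => t - ((σp i:ℂ) + (ωp i:ℂ) * Complex.I)) (f' := fun _ => (1:ℂ)) (x := s)
      (fun i _ => (hasDerivAt_id s).sub_const _)
    simpa using h
  have hP' : (∑ k : Fin m, ∏ j ∈ Finset.univ.erase k, (s - ((σz j:ℂ) + (ωz j:ℂ) * Complex.I)))
      = (∑ k : Fin m, 1 / (s - ((σz k:ℂ) + (ωz k:ℂ) * Complex.I)))
        * ∏ k : Fin m, (s - ((σz k:ℂ) + (ωz k:ℂ) * Complex.I)) := by
    rw [Finset.sum_mul]
    refine Finset.sum_congr rfl fun k _ => ?_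
    rw [← Finset.mul_prod_erase Finset.univ _ (Finset.mem_univ k), one_div,
      inv_mul_cancel_left₀ (hzs k)]
  have hQ' : (∑ i : Fin n, ∏ j ∈ Finset.univ.erase i, (s - ((σp j:ℂ) + (ωp j:ℂ) * Complex.I)))
      = (∑ i : Fin n, 1 / (s - ((σp i:ℂ) + (ωp i:ℂ) * Complex.I)))
        * ∏ i : Fin n, (s - ((σp i:ℂ) + (ωp i:ℂ) * Complex.I)) := by
    rw [Finset.sum_mul]
    refine Finset.sum_congr rfl fun i _ => ?_
    rw [← Finset.mul_prod_erase Finset.univ _ (Finset.mem_univ i), one_div,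
      inv_mul_cancel_left₀ (hps i)]
  have hGd : HasDerivAt G
      ((((kG:ℂ) * (∑ k : Fin m, ∏ j ∈ Finset.univ.erase k,
          (s - ((σz j:ℂ) + (ωz j:ℂ) * Complex.I))))
          * ∏ i : Fin n, (s - ((σp i:ℂ) + (ωp i:ℂ) * Complex.I))
        - ((kG:ℂ) * ∏ k : Fin m, (s - ((σz k:ℂ) + (ωz k:ℂ) * Complex.I)))
          * ∑ i : Fin n, ∏ j ∈ Finset.univ.erase i, (s - ((σp j:ℂ) + (ωp j:ℂ) * Complex.I)))
        / (∏ i : Fin n, (s - ((σp i:ℂ) + (ωp i:ℂ) * Complex.I))) ^ 2) s := by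
    rw [hGfun]
    exact (hPd.const_mul (kG:ℂ)).div hQd hQs
  rw [hGd.deriv, hG s, hP', hQ']
  set P := ∏ k : Fin m, (s - ((σz k:ℂ) + (ωz k:ℂ) * Complex.I)) with hPdef
  set Q := ∏ i : Fin n, (s - ((σp i:ℂ) + (ωp i:ℂ) * Complex.I)) with hQdef
  set S1 := ∑ k : Fin m, 1 / (s - ((σz k:ℂ) + (ωz k:ℂ) * Complex.I)) with hS1def
  set S2 := ∑ i : Fin n, 1 / (s - ((σp i:ℂ) + (ωp i:ℂ) * Complex.I)) with hS2def
  clear_value P Q S1 S2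
  field_simp
end

section
/- If s₀ = σ₀ + iω₀ (ω₀ real) and h₀ is a real number with 1 + G(s₀)·e^{−h₀·s₀} = 0, then G′(s₀)/G(s₀) − h₀ = φ′(ω₀) + ω₀·H′(ω₀) − i·σ₀·H′(ω₀). -/
open Complex Real Filter Finset Set

theorem stmt_10
    (m n : ℕ) (kG : ℝ) (hkG : kG ≠ 0)
    (σz ωz : Fin m → ℝ) (σp ωp : Fin n → ℝ)
    (σ0 : ℝ) (hσ0 : σ0 < 0)
    (hz : ∀ k, σz k ≠ σ0) (hp : ∀ i, σp i ≠ σ0)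
    (G : ℂ → ℂ)
    (hG : ∀ s : ℂ, G s =
      (kG : ℂ) * (∏ k : Fin m, (s - ((σz k : ℂ) + (ωz k : ℂ) * Complex.I))) /
        (∏ i : Fin n, (s - ((σp i : ℂ) + (ωp i : ℂ) * Complex.I))))
    (γz : Fin m → ℝ → ℝ)
    (hγz : ∀ (k : Fin m) (ω : ℝ), γz k ω = (σ0 - σz k) ^ 2 + (ω - ωz k) ^ 2)
    (γp : Fin n → ℝ → ℝ)
    (hγp : ∀ (i : Fin n) (ω : ℝ), γp i ω = (σ0 - σp i) ^ 2 + (ω - ωp i) ^ 2)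
    (H : ℝ → ℝ)
    (hH : ∀ ω : ℝ, H ω = Real.log ‖G ((σ0 : ℂ) + (ω : ℂ) * Complex.I)‖ / σ0)
    (Θ : ℝ → ℝ)
    (hΘ : ∀ ω : ℝ, Θ ω =
      (∑ k : Fin m, Real.arctan ((ω - ωz k) / (σ0 - σz k)))
        - ∑ i : Fin n, Real.arctan ((ω - ωp i) / (σ0 - σp i)))
    (φ : ℝ → ℝ) (hφ : ∀ ω : ℝ, φ ω = Θ ω - ω * H ω)
    (ω0 h0 : ℝ) (s0 : ℂ) (hs0 : s0 = (σ0 : ℂ) + (ω0 : ℂ) * Complex.I)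
    (hchar : 1 + G s0 * Complex.exp (-(h0 : ℂ) * s0) = 0)
    : deriv G s0 / G s0 - (h0 : ℂ) =
      ((deriv φ ω0 + ω0 * deriv H ω0 : ℝ) : ℂ)
        - Complex.I * (σ0 : ℂ) * ((deriv H ω0 : ℝ) : ℂ) := by
  have hσ0ne : σ0 ≠ 0 := ne_of_lt hσ0
  -- basic nonvanishing facts
  have hσzne : ∀ k, σ0 - σz k ≠ 0 := fun k => sub_ne_zero.mpr (hz k).symm
  have hσpne : ∀ i, σ0 - σp i ≠ 0 := fun i => sub_ne_zero.mpr (hp i).symm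
  have hγzpos : ∀ (k : Fin m) (ω : ℝ), 0 < γz k ω := by
    intro k ω
    have h1 := hσzne k
    rw [hγz]
    positivity
  have hγppos : ∀ (i : Fin n) (ω : ℝ), 0 < γp i ω := by
    intro i ω
    have h1 := hσpne i
    rw [hγp]
    positivity
  -- factors nonzero at arbitrary points on the line
  have hfz : ∀ (ω : ℝ) (k : Fin m),
      ((σ0 : ℂ) + (ω : ℂ) * Complex.I) - ((σz k : ℂ) + (ωz k : ℂ) * Complex.I) ≠ 0 := by
    intro ω k h
    apply hσzne k
    have := congrArg Complex.re h
    simpa using this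
  have hfp : ∀ (ω : ℝ) (i : Fin n),
      ((σ0 : ℂ) + (ω : ℂ) * Complex.I) - ((σp i : ℂ) + (ωp i : ℂ) * Complex.I) ≠ 0 := by
    intro ω i h
    apply hσpne i
    have := congrArg Complex.re h
    simpa using this
  -- Step 1: logarithmic derivative of G at s0
  have hGfun : G = fun s => ((kG : ℂ) *
      (∏ k : Fin m, (s - ((σz k : ℂ) + (ωz k : ℂ) * Complex.I)))) /
        (∏ i : Fin n, (s - ((σp i : ℂ) + (ωp i : ℂ) * Complex.I))) := funext hG
  have hPne : (∏ k : Fin m, (s0 - ((σz k : ℂ) + (ωz k : ℂ) * Complex.I))) ≠ 0 := by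
    rw [Finset.prod_ne_zero_iff]
    intro k _; rw [hs0]; exact hfz ω0 k
  have hQne : (∏ i : Fin n, (s0 - ((σp i : ℂ) + (ωp i : ℂ) * Complex.I))) ≠ 0 := by
    rw [Finset.prod_ne_zero_iff]
    intro i _; rw [hs0]; exact hfp ω0 i
  have hPd : DifferentiableAt ℂ
      (fun s => ∏ k : Fin m, (s - ((σz k : ℂ) + (ωz k : ℂ) * Complex.I))) s0 :=
    DifferentiableAt.fun_finsetProd (fun k _ => (differentiable_id.sub_const _).differentiableAt)
  have hQd : DifferentiableAt ℂ
      (fun s => ∏ i : Fin n, (s - ((σp i : ℂ) + (ωp i : ℂ) * Complex.I))) s0 :=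
    DifferentiableAt.fun_finsetProd (fun i _ => (differentiable_id.sub_const _).differentiableAt)
  have hlogG : logDeriv G s0 =
      (∑ k : Fin m, (s0 - ((σz k : ℂ) + (ωz k : ℂ) * Complex.I))⁻¹)
        - ∑ i : Fin n, (s0 - ((σp i : ℂ) + (ωp i : ℂ) * Complex.I))⁻¹ := by
    rw [hGfun]
    rw [logDeriv_div (f := fun s => (kG : ℂ) *
        (∏ k : Fin m, (s - ((σz k : ℂ) + (ωz k : ℂ) * Complex.I))))
      (g := fun s => ∏ i : Fin n, (s - ((σp i : ℂ) + (ωp i : ℂ) * Complex.I)))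
      s0 (mul_ne_zero (by exact_mod_cast hkG) hPne) hQne
      ((differentiableAt_const _).mul hPd) hQd,
      logDeriv_const_mul (f := fun s => ∏ k : Fin m,
        (s - ((σz k : ℂ) + (ωz k : ℂ) * Complex.I)))
        s0 _ (by exact_mod_cast hkG : (kG : ℂ) ≠ 0),
      logDeriv_prod (fun k _ => by rw [hs0]; exact hfz ω0 k)
        (fun k _ => (differentiable_id.sub_const _).differentiableAt),
      logDeriv_prod (fun i _ => by rw [hs0]; exact hfp ω0 i)
        (fun i _ => (differentiable_id.sub_const _).differentiableAt)]
    congr 1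
    · refine Finset.sum_congr rfl fun k _ => ?_
      rw [logDeriv_apply, deriv_sub_const, deriv_id'', one_div]
    · refine Finset.sum_congr rfl fun i _ => ?_
      rw [logDeriv_apply, deriv_sub_const, deriv_id'', one_div]
  -- Step 2: explicit formula for H
  have habs : ∀ ω : ℝ, Real.log ‖G ((σ0 : ℂ) + (ω : ℂ) * Complex.I)‖ =
      Real.log |kG| + (∑ k : Fin m, Real.log (γz k ω) / 2)
        - ∑ i : Fin n, Real.log (γp i ω) / 2 := by
    intro ω
    have hfactz : ∀ k : Fin m,
        ‖((σ0 : ℂ) + (ω : ℂ) * Complex.I) - ((σz k : ℂ) + (ωz k : ℂ) * Complex.I)‖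
          = Real.sqrt (γz k ω) := by
      intro k
      have : ((σ0 : ℂ) + (ω : ℂ) * Complex.I) - ((σz k : ℂ) + (ωz k : ℂ) * Complex.I)
          = ((σ0 - σz k : ℝ) : ℂ) + ((ω - ωz k : ℝ) : ℂ) * Complex.I := by
        push_cast; ring
      rw [this, Complex.norm_add_mul_I, hγz]
    have hfactp : ∀ i : Fin n,
        ‖((σ0 : ℂ) + (ω : ℂ) * Complex.I) - ((σp i : ℂ) + (ωp i : ℂ) * Complex.I)‖
          = Real.sqrt (γp i ω) := by
      intro i
      have : ((σ0 : ℂ) + (ω : ℂ) * Complex.I) - ((σp i : ℂ) + (ωp i : ℂ) * Complex.I)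
          = ((σ0 - σp i : ℝ) : ℂ) + ((ω - ωp i : ℝ) : ℂ) * Complex.I := by
        push_cast; ring
      rw [this, Complex.norm_add_mul_I, hγp]
    rw [hG, norm_div, norm_mul]
    rw [Complex.norm_real, Real.norm_eq_abs, norm_prod, norm_prod]
    have hAz : ∀ k : Fin m, 0 < Real.sqrt (γz k ω) := fun k =>
      Real.sqrt_pos.mpr (hγzpos k ω)
    have hAp : ∀ i : Fin n, 0 < Real.sqrt (γp i ω) := fun i =>
      Real.sqrt_pos.mpr (hγppos i ω)
    simp only [hfactz, hfactp]
    rw [Real.log_div (mul_ne_zero (abs_ne_zero.mpr hkG)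
        (ne_of_gt (Finset.prod_pos fun k _ => hAz k)))
        (ne_of_gt (Finset.prod_pos fun i _ => hAp i)),
      Real.log_mul (abs_ne_zero.mpr hkG) (ne_of_gt (Finset.prod_pos fun k _ => hAz k)),
      Real.log_prod (fun k _ => ne_of_gt (hAz k)),
      Real.log_prod (fun i _ => ne_of_gt (hAp i))]
    congr 1
    · congr 1
      exact Finset.sum_congr rfl fun k _ => Real.log_sqrt (le_of_lt (hγzpos k ω))
    · exact Finset.sum_congr rfl fun i _ => Real.log_sqrt (le_of_lt (hγppos i ω))
  have hHfun : H = fun ω => (Real.log |kG| + (∑ k : Fin m, Real.log (γz k ω) / 2)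
        - ∑ i : Fin n, Real.log (γp i ω) / 2) / σ0 := by
    funext ω; rw [hH, habs]
  -- derivatives of the γ's and their half-logs
  have hγzD : ∀ k : Fin m, HasDerivAt (fun ω => Real.log (γz k ω) / 2)
      ((ω0 - ωz k) / γz k ω0) ω0 := by
    intro k
    have hfun : γz k = fun ω => (σ0 - σz k) ^ 2 + (ω - ωz k) ^ 2 := funext (hγz k)
    have h1 : HasDerivAt (fun ω : ℝ => (σ0 - σz k) ^ 2 + (ω - ωz k) ^ 2)
        (2 * (ω0 - ωz k)) ω0 := by
      have := (((hasDerivAt_id ω0).sub_const (ωz k)).pow 2).const_add ((σ0 - σz k) ^ 2)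
      simpa using this
    have h2 := (h1.log (by have := hγzpos k ω0; rw [hγz] at this; exact ne_of_gt this)).div_const 2
    simp only [← hγz] at h2
    have e : (ω0 - ωz k) / γz k ω0 = 2 * (ω0 - ωz k) / γz k ω0 / 2 := by ring
    rw [e]; exact h2
  have hγpD : ∀ i : Fin n, HasDerivAt (fun ω => Real.log (γp i ω) / 2)
      ((ω0 - ωp i) / γp i ω0) ω0 := by
    intro i
    have hfun : γp i = fun ω => (σ0 - σp i) ^ 2 + (ω - ωp i) ^ 2 := funext (hγp i)
    have h1 : HasDerivAt (fun ω : ℝ => (σ0 - σp i) ^ 2 + (ω - ωp i) ^ 2)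
        (2 * (ω0 - ωp i)) ω0 := by
      have := (((hasDerivAt_id ω0).sub_const (ωp i)).pow 2).const_add ((σ0 - σp i) ^ 2)
      simpa using this
    have h2 := (h1.log (by have := hγppos i ω0; rw [hγp] at this; exact ne_of_gt this)).div_const 2
    simp only [← hγp] at h2
    have e : (ω0 - ωp i) / γp i ω0 = 2 * (ω0 - ωp i) / γp i ω0 / 2 := by ring
    rw [e]; exact h2
  -- derivative of H
  set dH : ℝ := ((∑ k : Fin m, (ω0 - ωz k) / γz k ω0)
      - ∑ i : Fin n, (ω0 - ωp i) / γp i ω0) / σ0 with hdH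
  have hHD : HasDerivAt H dH ω0 := by
    rw [hHfun]
    exact ((((HasDerivAt.fun_sum (fun k _ => hγzD k)).const_add (Real.log |kG|)).sub
      (HasDerivAt.fun_sum (fun i _ => hγpD i))).div_const σ0)
  -- derivative of Θ
  set dΘ : ℝ := (∑ k : Fin m, (σ0 - σz k) / γz k ω0)
      - ∑ i : Fin n, (σ0 - σp i) / γp i ω0 with hdΘ
  have hΘzD : ∀ k : Fin m, HasDerivAt (fun ω => Real.arctan ((ω - ωz k) / (σ0 - σz k)))
      ((σ0 - σz k) / γz k ω0) ω0 := by
    intro k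
    have h1 : HasDerivAt (fun ω : ℝ => (ω - ωz k) / (σ0 - σz k)) (1 / (σ0 - σz k)) ω0 := by
      simpa [div_eq_mul_inv, one_div] using
        (((hasDerivAt_id ω0).sub_const (ωz k)).div_const (σ0 - σz k))
    have h2 := h1.arctan
    convert h2 using 1
    rw [hγz]
    have := hσzne k
    have hne : (σ0 - σz k) ^ 2 + (ω0 - ωz k) ^ 2 ≠ 0 := by positivity
    field_simp
  have hΘpD : ∀ i : Fin n, HasDerivAt (fun ω => Real.arctan ((ω - ωp i) / (σ0 - σp i)))
      ((σ0 - σp i) / γp i ω0) ω0 := by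
    intro i
    have h1 : HasDerivAt (fun ω : ℝ => (ω - ωp i) / (σ0 - σp i)) (1 / (σ0 - σp i)) ω0 := by
      simpa [div_eq_mul_inv, one_div] using
        (((hasDerivAt_id ω0).sub_const (ωp i)).div_const (σ0 - σp i))
    have h2 := h1.arctan
    convert h2 using 1
    rw [hγp]
    have := hσpne i
    have hne : (σ0 - σp i) ^ 2 + (ω0 - ωp i) ^ 2 ≠ 0 := by positivity
    field_simp
  have hΘD : HasDerivAt Θ dΘ ω0 := by
    have : Θ = fun ω => (∑ k : Fin m, Real.arctan ((ω - ωz k) / (σ0 - σz k)))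
        - ∑ i : Fin n, Real.arctan ((ω - ωp i) / (σ0 - σp i)) := funext hΘ
    rw [this]
    exact (HasDerivAt.fun_sum (fun k _ => hΘzD k)).sub (HasDerivAt.fun_sum (fun i _ => hΘpD i))
  -- derivative of φ
  have hφD : HasDerivAt φ (dΘ - (1 * H ω0 + ω0 * dH)) ω0 := by
    have : φ = fun ω => Θ ω - ω * H ω := funext hφ
    rw [this]
    exact hΘD.sub ((hasDerivAt_id ω0).mul hHD)
  -- h0 = H ω0
  have hGs0 : ‖G s0‖ = Real.exp (h0 * σ0) := by
    have h1 : G s0 * Complex.exp (-(h0 : ℂ) * s0) = -1 := by linear_combination hchar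
    have h2 := congrArg (‖·‖) h1
    rw [norm_mul, Complex.norm_exp] at h2
    have h3 : ((-(h0 : ℂ)) * s0).re = -(h0 * σ0) := by
      rw [hs0]; simp
    rw [h3] at h2
    simp only [norm_neg, norm_one] at h2
    have h4 : Real.exp (-(h0 * σ0)) ≠ 0 := Real.exp_ne_zero _
    field_simp [Real.exp_neg] at h2 ⊢
    calc ‖G s0‖ = ‖G s0‖ * Real.exp (-(h0 * σ0)) * Real.exp (h0 * σ0) := by
          rw [mul_assoc, ← Real.exp_add, neg_add_cancel, Real.exp_zero, mul_one]
      _ = Real.exp (h0 * σ0) := by rw [h2, one_mul]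
  have hHω0 : H ω0 = h0 := by
    rw [hH, ← hs0, hGs0, Real.log_exp]
    field_simp
  -- inverse formulas for the linear factors
  have hinvz : ∀ k : Fin m, (s0 - ((σz k : ℂ) + (ωz k : ℂ) * Complex.I))⁻¹
      = (((σ0 - σz k) / γz k ω0 : ℝ) : ℂ)
        - Complex.I * (((ω0 - ωz k) / γz k ω0 : ℝ) : ℂ) := by
    intro k
    refine inv_eq_of_mul_eq_one_right ?_
    have hγC : ((γz k ω0 : ℝ) : ℂ) = ((σ0 : ℂ) - σz k) ^ 2 + ((ω0 : ℂ) - ωz k) ^ 2 := by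
      rw [hγz]; push_cast; ring
    have hγne : ((γz k ω0 : ℝ) : ℂ) ≠ 0 := by
      exact_mod_cast ne_of_gt (hγzpos k ω0)
    rw [hs0]
    push_cast
    field_simp
    linear_combination (-1 : ℂ) * hγC + (-((ω0 : ℂ) - ωz k) ^ 2) * Complex.I_sq
  have hinvp : ∀ i : Fin n, (s0 - ((σp i : ℂ) + (ωp i : ℂ) * Complex.I))⁻¹
      = (((σ0 - σp i) / γp i ω0 : ℝ) : ℂ)
        - Complex.I * (((ω0 - ωp i) / γp i ω0 : ℝ) : ℂ) := by
    intro i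
    refine inv_eq_of_mul_eq_one_right ?_
    have hγC : ((γp i ω0 : ℝ) : ℂ) = ((σ0 : ℂ) - σp i) ^ 2 + ((ω0 : ℂ) - ωp i) ^ 2 := by
      rw [hγp]; push_cast; ring
    have hγne : ((γp i ω0 : ℝ) : ℂ) ≠ 0 := by
      exact_mod_cast ne_of_gt (hγppos i ω0)
    rw [hs0]
    push_cast
    field_simp
    linear_combination (-1 : ℂ) * hγC + (-((ω0 : ℂ) - ωp i) ^ 2) * Complex.I_sq
  -- put everything together
  have hderivG : deriv G s0 / G s0 = logDeriv G s0 := (logDeriv_apply _ _).symm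
  rw [hderivG, hlogG, hφD.deriv, hHD.deriv, hHω0]
  simp only [hinvz, hinvp]
  rw [Finset.sum_sub_distrib, Finset.sum_sub_distrib, ← Finset.mul_sum, ← Finset.mul_sum,
    hdΘ, hdH]
  push_cast
  have hσ0C : (σ0 : ℂ) ≠ 0 := Complex.ofReal_ne_zero.mpr hσ0ne
  field_simp
  ring
end

section
/- (Multiple-root characterization.) Let s₀ = σ₀ + iω₀ with ω₀ ≥ 0 and let h₀ be a real number such that 1 + G(s₀)·e^{−h₀·s₀} = 0. Then s₀ is a characteristic root of multiplicity more than one at h₀, i.e. G′(s₀) − h₀·G(s₀) = 0, if and only if H′(ω₀) = 0 and φ′(ω₀) = 0; moreover in this situation necessarily h₀ = H(ω₀). -/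
open Complex Real Filter Finset Set

private lemma aux_prod_deriv {m : ℕ} (zc : Fin m → ℂ) (s0 : ℂ)
    (hzc : ∀ k, s0 - zc k ≠ 0) :
    HasDerivAt (fun s => ∏ k : Fin m, (s - zc k))
      ((∏ k : Fin m, (s0 - zc k)) * ∑ k : Fin m, (s0 - zc k)⁻¹) s0 := by
  have h := HasDerivAt.fun_finsetProd (u := Finset.univ)
    (f := fun (k : Fin m) (s : ℂ) => s - zc k) (f' := fun _ => 1) (x := s0)
    (fun k _ => (hasDerivAt_id s0).sub_const (zc k))
  refine h.congr_deriv (Eq.symm ?_)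
  rw [Finset.mul_sum]
  refine Finset.sum_congr rfl fun k _ => ?_
  rw [smul_eq_mul, mul_one, ← Finset.mul_prod_erase _ _ (Finset.mem_univ k),
    mul_comm (s0 - zc k), mul_assoc, mul_inv_cancel₀ (hzc k), mul_one]

set_option maxHeartbeats 1000000 in
theorem stmt_13
    (m n : ℕ) (kG : ℝ) (hkG : kG ≠ 0)
    (σz ωz : Fin m → ℝ) (σp ωp : Fin n → ℝ)
    (σ0 : ℝ) (hσ0 : σ0 < 0)
    (hz : ∀ k, σz k ≠ σ0) (hp : ∀ i, σp i ≠ σ0)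
    (G : ℂ → ℂ)
    (hG : ∀ s : ℂ, G s =
      (kG : ℂ) * (∏ k : Fin m, (s - ((σz k : ℂ) + (ωz k : ℂ) * Complex.I))) /
        (∏ i : Fin n, (s - ((σp i : ℂ) + (ωp i : ℂ) * Complex.I))))
    (γz : Fin m → ℝ → ℝ)
    (hγz : ∀ (k : Fin m) (ω : ℝ), γz k ω = (σ0 - σz k) ^ 2 + (ω - ωz k) ^ 2)
    (γp : Fin n → ℝ → ℝ)
    (hγp : ∀ (i : Fin n) (ω : ℝ), γp i ω = (σ0 - σp i) ^ 2 + (ω - ωp i) ^ 2)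
    (H : ℝ → ℝ)
    (hH : ∀ ω : ℝ, H ω = Real.log ‖G ((σ0 : ℂ) + (ω : ℂ) * Complex.I)‖ / σ0)
    (Θ : ℝ → ℝ)
    (hΘ : ∀ ω : ℝ, Θ ω =
      (∑ k : Fin m, Real.arctan ((ω - ωz k) / (σ0 - σz k)))
        - ∑ i : Fin n, Real.arctan ((ω - ωp i) / (σ0 - σp i)))
    (φ : ℝ → ℝ) (hφ : ∀ ω : ℝ, φ ω = Θ ω - ω * H ω)
    (ω0 h0 : ℝ) (hω0 : 0 ≤ ω0) (s0 : ℂ) (hs0 : s0 = (σ0 : ℂ) + (ω0 : ℂ) * Complex.I)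
    (hchar : 1 + G s0 * Complex.exp (-(h0 : ℂ) * s0) = 0)
    : (deriv G s0 - (h0 : ℂ) * G s0 = 0 ↔ deriv H ω0 = 0 ∧ deriv φ ω0 = 0) ∧
      (deriv G s0 - (h0 : ℂ) * G s0 = 0 → h0 = H ω0) := by
  have hσ0' : σ0 ≠ 0 := ne_of_lt hσ0
  -- shorthand for the zeros and poles
  set zc : Fin m → ℂ := fun k => (σz k : ℂ) + (ωz k : ℂ) * Complex.I with hzc_def
  set pc : Fin n → ℂ := fun i => (σp i : ℂ) + (ωp i : ℂ) * Complex.I with hpc_def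
  -- basic facts about differences
  have hσzne : ∀ k, σ0 - σz k ≠ 0 := fun k => sub_ne_zero.mpr (Ne.symm (hz k))
  have hσpne : ∀ i, σ0 - σp i ≠ 0 := fun i => sub_ne_zero.mpr (Ne.symm (hp i))
  have hγzpos : ∀ (k : Fin m) (ω : ℝ), 0 < γz k ω := by
    intro k ω; rw [hγz]
    have h2 : 0 < (σ0 - σz k) ^ 2 :=
      (sq_nonneg _).lt_of_ne (Ne.symm (pow_ne_zero 2 (hσzne k)))
    linarith [sq_nonneg (ω - ωz k)]
  have hγppos : ∀ (i : Fin n) (ω : ℝ), 0 < γp i ω := by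
    intro i ω; rw [hγp]
    have h2 : 0 < (σ0 - σp i) ^ 2 :=
      (sq_nonneg _).lt_of_ne (Ne.symm (pow_ne_zero 2 (hσpne i)))
    linarith [sq_nonneg (ω - ωp i)]
  -- G s0 ≠ 0
  have hGs0 : G s0 ≠ 0 := by
    intro h
    rw [h, zero_mul, add_zero] at hchar
    exact one_ne_zero hchar
  -- factors nonzero on the whole line σ0 + iω
  have hwz : ∀ (k : Fin m) (ω : ℝ),
      ((σ0 : ℂ) + (ω : ℂ) * Complex.I) - zc k
        = ((σ0 - σz k : ℝ) : ℂ) + ((ω - ωz k : ℝ) : ℂ) * Complex.I := by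
    intro k ω; simp only [hzc_def]; push_cast; ring
  have hwp : ∀ (i : Fin n) (ω : ℝ),
      ((σ0 : ℂ) + (ω : ℂ) * Complex.I) - pc i
        = ((σ0 - σp i : ℝ) : ℂ) + ((ω - ωp i : ℝ) : ℂ) * Complex.I := by
    intro i ω; simp only [hpc_def]; push_cast; ring
  have habsz : ∀ (k : Fin m) (ω : ℝ),
      ‖((σ0 : ℂ) + (ω : ℂ) * Complex.I) - zc k‖ = Real.sqrt (γz k ω) := by
    intro k ω; rw [hwz, Complex.norm_add_mul_I, hγz]
  have habsp : ∀ (i : Fin n) (ω : ℝ),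
      ‖((σ0 : ℂ) + (ω : ℂ) * Complex.I) - pc i‖ = Real.sqrt (γp i ω) := by
    intro i ω; rw [hwp, Complex.norm_add_mul_I, hγp]
  have hzne : ∀ k, s0 - zc k ≠ 0 := by
    intro k h
    have h2 : Real.sqrt (γz k ω0) ≠ 0 := ne_of_gt (Real.sqrt_pos.mpr (hγzpos k ω0))
    apply h2
    rw [← habsz k ω0, ← hs0, h, norm_zero]
  have hpne : ∀ i, s0 - pc i ≠ 0 := by
    intro i h
    have h2 : Real.sqrt (γp i ω0) ≠ 0 := ne_of_gt (Real.sqrt_pos.mpr (hγppos i ω0))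
    apply h2
    rw [← habsp i ω0, ← hs0, h, norm_zero]
  have hD0 : (∏ i : Fin n, (s0 - pc i)) ≠ 0 :=
    Finset.prod_ne_zero_iff.mpr fun i _ => hpne i
  -- the logarithmic derivative
  set Sz : ℂ := ∑ k : Fin m, (s0 - zc k)⁻¹ with hSz
  set Sp : ℂ := ∑ i : Fin n, (s0 - pc i)⁻¹ with hSp
  -- derivative of G
  have hGfun : G = fun s => (kG : ℂ) * (∏ k : Fin m, (s - zc k)) / (∏ i : Fin n, (s - pc i)) :=
    funext hG
  have hGder : HasDerivAt G
      (((kG : ℂ) * (∏ k : Fin m, (s0 - zc k)) / (∏ i : Fin n, (s0 - pc i)))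
        * (Sz - Sp)) s0 := by
    rw [hGfun]
    have hnum : HasDerivAt (fun s => (kG : ℂ) * ∏ k : Fin m, (s - zc k))
        ((kG : ℂ) * ((∏ k : Fin m, (s0 - zc k)) * Sz)) s0 :=
      (aux_prod_deriv zc s0 hzne).const_mul _
    have hden : HasDerivAt (fun s => ∏ i : Fin n, (s - pc i))
        ((∏ i : Fin n, (s0 - pc i)) * Sp) s0 := aux_prod_deriv pc s0 hpne
    have := hnum.div hden hD0
    refine this.congr_deriv (Eq.symm ?_)
    field_simp
  have hderivG : deriv G s0 = G s0 * (Sz - Sp) := by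
    rw [hGder.deriv, hG s0]
  -- real and imaginary parts of Sz - Sp
  have hre_z : ∀ k : Fin m, ((s0 - zc k)⁻¹).re = (σ0 - σz k) / γz k ω0 := by
    intro k
    rw [hs0, hwz k ω0, Complex.inv_re, Complex.normSq_apply]
    simp [hγz]
    ring_nf
  have him_z : ∀ k : Fin m, ((s0 - zc k)⁻¹).im = -((ω0 - ωz k) / γz k ω0) := by
    intro k
    rw [hs0, hwz k ω0, Complex.inv_im, Complex.normSq_apply]
    simp [hγz]
    ring_nf
  have hre_p : ∀ i : Fin n, ((s0 - pc i)⁻¹).re = (σ0 - σp i) / γp i ω0 := by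
    intro i
    rw [hs0, hwp i ω0, Complex.inv_re, Complex.normSq_apply]
    simp [hγp]
    ring_nf
  have him_p : ∀ i : Fin n, ((s0 - pc i)⁻¹).im = -((ω0 - ωp i) / γp i ω0) := by
    intro i
    rw [hs0, hwp i ω0, Complex.inv_im, Complex.normSq_apply]
    simp [hγp]
    ring_nf
  set Tre : ℝ := (∑ k : Fin m, (σ0 - σz k) / γz k ω0) - ∑ i : Fin n, (σ0 - σp i) / γp i ω0
    with hTre
  set Tim : ℝ := (∑ k : Fin m, (ω0 - ωz k) / γz k ω0) - ∑ i : Fin n, (ω0 - ωp i) / γp i ω0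
    with hTim
  have hLre : (Sz - Sp).re = Tre := by
    rw [Complex.sub_re, hSz, hSp, Complex.re_sum, Complex.re_sum, hTre]
    congr 1
    · exact Finset.sum_congr rfl fun k _ => hre_z k
    · exact Finset.sum_congr rfl fun i _ => hre_p i
  have hLim : (Sz - Sp).im = -Tim := by
    rw [Complex.sub_im, hSz, hSp, Complex.im_sum, Complex.im_sum, hTim]
    rw [Finset.sum_congr rfl fun k _ => him_z k, Finset.sum_congr rfl fun i _ => him_p i]
    rw [Finset.sum_neg_distrib, Finset.sum_neg_distrib]
    ring
  -- an explicit formula for H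
  have hHf : H = fun ω => (Real.log |kG|
      + (∑ k : Fin m, Real.log (γz k ω)) / 2
      - (∑ i : Fin n, Real.log (γp i ω)) / 2) / σ0 := by
    funext ω
    rw [hH ω, hG]
    congr 1
    rw [norm_div, norm_mul, norm_prod, norm_prod]
    rw [Complex.norm_real, Real.norm_eq_abs]
    rw [Finset.prod_congr rfl fun k _ => habsz k ω,
      Finset.prod_congr rfl fun i _ => habsp i ω]
    have hkabs : |kG| ≠ 0 := abs_ne_zero.mpr hkG
    have hsz : ∀ k : Fin m, Real.sqrt (γz k ω) ≠ 0 :=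
      fun k => ne_of_gt (Real.sqrt_pos.mpr (hγzpos k ω))
    have hsp : ∀ i : Fin n, Real.sqrt (γp i ω) ≠ 0 :=
      fun i => ne_of_gt (Real.sqrt_pos.mpr (hγppos i ω))
    have hPz : (∏ k : Fin m, Real.sqrt (γz k ω)) ≠ 0 :=
      Finset.prod_ne_zero_iff.mpr fun k _ => hsz k
    have hPp : (∏ i : Fin n, Real.sqrt (γp i ω)) ≠ 0 :=
      Finset.prod_ne_zero_iff.mpr fun i _ => hsp i
    rw [Real.log_div (mul_ne_zero hkabs hPz) hPp, Real.log_mul hkabs hPz,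
      Real.log_prod (fun k _ => hsz k), Real.log_prod (fun i _ => hsp i)]
    rw [Finset.sum_congr rfl fun k _ => Real.log_sqrt (le_of_lt (hγzpos k ω)),
      Finset.sum_congr rfl fun i _ => Real.log_sqrt (le_of_lt (hγppos i ω))]
    rw [← Finset.sum_div, ← Finset.sum_div]
  -- derivative of H
  have hHd : HasDerivAt H (Tim / σ0) ω0 := by
    rw [hHf]
    have hsum : HasDerivAt (fun ω => Real.log |kG|
        + (∑ k : Fin m, Real.log (γz k ω)) / 2
        - (∑ i : Fin n, Real.log (γp i ω)) / 2) Tim ω0 := by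
      have hz' : ∀ k : Fin m, HasDerivAt (fun ω => Real.log (γz k ω))
          (2 * (ω0 - ωz k) / γz k ω0) ω0 := by
        intro k
        have h1 : HasDerivAt (γz k) (2 * (ω0 - ωz k)) ω0 := by
          have : HasDerivAt (fun ω : ℝ => (σ0 - σz k) ^ 2 + (ω - ωz k) ^ 2)
              (2 * (ω0 - ωz k)) ω0 := by
            have := (((hasDerivAt_id ω0).sub_const (ωz k)).pow 2).const_add ((σ0 - σz k) ^ 2)
            simpa using this
          exact (funext (hγz k) : γz k = _) ▸ this
        exact h1.log (ne_of_gt (hγzpos k ω0))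
      have hp' : ∀ i : Fin n, HasDerivAt (fun ω => Real.log (γp i ω))
          (2 * (ω0 - ωp i) / γp i ω0) ω0 := by
        intro i
        have h1 : HasDerivAt (γp i) (2 * (ω0 - ωp i)) ω0 := by
          have : HasDerivAt (fun ω : ℝ => (σ0 - σp i) ^ 2 + (ω - ωp i) ^ 2)
              (2 * (ω0 - ωp i)) ω0 := by
            have := (((hasDerivAt_id ω0).sub_const (ωp i)).pow 2).const_add ((σ0 - σp i) ^ 2)
            simpa using this
          exact (funext (hγp i) : γp i = _) ▸ this
        exact h1.log (ne_of_gt (hγppos i ω0))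
      have hsz : HasDerivAt (fun ω => ∑ k : Fin m, Real.log (γz k ω))
          (∑ k : Fin m, 2 * (ω0 - ωz k) / γz k ω0) ω0 :=
        HasDerivAt.fun_sum fun k _ => hz' k
      have hsp : HasDerivAt (fun ω => ∑ i : Fin n, Real.log (γp i ω))
          (∑ i : Fin n, 2 * (ω0 - ωp i) / γp i ω0) ω0 :=
        HasDerivAt.fun_sum fun i _ => hp' i
      have := ((hsz.div_const 2).const_add (Real.log |kG|)).sub (hsp.div_const 2)
      refine this.congr_deriv (Eq.symm ?_)
      rw [hTim, Finset.sum_div, Finset.sum_div]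
      congr 1
      · exact Finset.sum_congr rfl fun k _ => by
          field_simp
      · exact Finset.sum_congr rfl fun i _ => by
          field_simp
    exact hsum.div_const σ0
  -- derivative of Θ
  have hΘd : HasDerivAt Θ Tre ω0 := by
    rw [funext hΘ]
    have hz' : ∀ k : Fin m, HasDerivAt (fun ω => Real.arctan ((ω - ωz k) / (σ0 - σz k)))
        ((σ0 - σz k) / γz k ω0) ω0 := by
      intro k
      have hu : HasDerivAt (fun ω : ℝ => (ω - ωz k) / (σ0 - σz k)) (1 / (σ0 - σz k)) ω0 := by
        have := ((hasDerivAt_id ω0).sub_const (ωz k)).div_const (σ0 - σz k)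
        simpa [one_div] using this
      have hd := (Real.hasDerivAt_arctan ((ω0 - ωz k) / (σ0 - σz k))).comp ω0 hu
      have hne := hσzne k
      have h2 : (σ0 - σz k) ^ 2 + (ω0 - ωz k) ^ 2 ≠ 0 := by
        have h3 := hγzpos k ω0; rw [hγz] at h3; exact ne_of_gt h3
      refine hd.congr_deriv (Eq.symm ?_)
      rw [hγz]
      field_simp
    have hp' : ∀ i : Fin n, HasDerivAt (fun ω => Real.arctan ((ω - ωp i) / (σ0 - σp i)))
        ((σ0 - σp i) / γp i ω0) ω0 := by
      intro i
      have hu : HasDerivAt (fun ω : ℝ => (ω - ωp i) / (σ0 - σp i)) (1 / (σ0 - σp i)) ω0 := by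
        have := ((hasDerivAt_id ω0).sub_const (ωp i)).div_const (σ0 - σp i)
        simpa [one_div] using this
      have hd := (Real.hasDerivAt_arctan ((ω0 - ωp i) / (σ0 - σp i))).comp ω0 hu
      have hne := hσpne i
      have h2 : (σ0 - σp i) ^ 2 + (ω0 - ωp i) ^ 2 ≠ 0 := by
        have h3 := hγppos i ω0; rw [hγp] at h3; exact ne_of_gt h3
      refine hd.congr_deriv (Eq.symm ?_)
      rw [hγp]
      field_simp
    exact (HasDerivAt.fun_sum fun k _ => hz' k).sub (HasDerivAt.fun_sum fun i _ => hp' i)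
  -- derivative of φ
  have hφd : HasDerivAt φ (Tre - (H ω0 + ω0 * (Tim / σ0))) ω0 := by
    rw [funext hφ]
    have h := hΘd.sub ((hasDerivAt_id ω0).mul hHd)
    refine h.congr_deriv (Eq.symm ?_)
    simp
  -- h0 = H ω0 from the characteristic equation
  have hh0 : h0 = H ω0 := by
    have habs : ‖G s0‖ * Real.exp (-h0 * σ0) = 1 := by
      have h1 : G s0 * Complex.exp (-(h0 : ℂ) * s0) = -1 := by linear_combination hchar
      have h2 := congrArg (‖·‖) h1
      rw [norm_mul, Complex.norm_exp] at h2
      have hre : ((-(h0 : ℂ)) * s0).re = -h0 * σ0 := by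
        rw [hs0]; simp
      rw [hre] at h2
      simpa using h2
    have hlog := congrArg Real.log habs
    rw [Real.log_mul (norm_ne_zero_iff.mpr hGs0) (Real.exp_pos _).ne',
      Real.log_exp, Real.log_one] at hlog
    rw [hH ω0, ← hs0]
    have : Real.log ‖G s0‖ = h0 * σ0 := by linarith
    rw [this]
    field_simp
  -- the main equivalence
  have hcond : deriv G s0 - (h0 : ℂ) * G s0 = 0 ↔ Sz - Sp = (h0 : ℂ) := by
    rw [hderivG]
    constructor
    · intro h
      have : G s0 * (Sz - Sp - (h0 : ℂ)) = 0 := by ring_nf; linear_combination h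
      rcases mul_eq_zero.mp this with h' | h'
      · exact absurd h' hGs0
      · linear_combination h'
    · intro h
      rw [h]
      ring
  have hderivH : deriv H ω0 = Tim / σ0 := hHd.deriv
  have hderivφ : deriv φ ω0 = Tre - (H ω0 + ω0 * (Tim / σ0)) := hφd.deriv
  constructor
  · rw [hcond, hderivH, hderivφ]
    rw [Complex.ext_iff, hLre, hLim]
    simp only [Complex.ofReal_re, Complex.ofReal_im]
    constructor
    · rintro ⟨h1, h2⟩
      have hTim0 : Tim = 0 := by linarith [neg_eq_zero.mp h2]
      refine ⟨by rw [hTim0]; simp, ?_⟩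
      rw [hTim0, h1, hh0]
      simp
    · rintro ⟨h1, h2⟩
      have hTim0 : Tim = 0 := by
        field_simp at h1
        simpa using h1
      refine ⟨?_, by rw [hTim0]; simp⟩
      rw [hTim0] at h2
      simp at h2
      rw [hh0]
      linarith
  · intro _
    exact hh0
end

section
/- (Continuous phase factorization.) For every real ω, G(σ₀ + iω) · |G(σ₀)| · e^{i·Θ(0)} = G(σ₀) · |G(σ₀ + iω)| · e^{i·Θ(ω)}; that is, Θ(ω) is a continuous choice of the argument of G along the line s = σ₀ + iω up to the constant offset determined at ω = 0. -/
open Complex Real Filter Finset Set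

lemma aux_sqrt1 (x y : ℝ) (hx : x ≠ 0) :
    Real.sqrt (1 + (y/x)^2) = Real.sqrt (x^2+y^2) / |x| := by
  rw [show (1 + (y/x)^2) = (x^2+y^2) / x^2 by field_simp,
    Real.sqrt_div (by positivity), Real.sqrt_sq_eq_abs]

lemma aux_factor (x y : ℝ) (hx : x ≠ 0) :
    (x : ℂ) + (y : ℂ) * Complex.I =
      ((Real.sign x : ℝ) : ℂ) * ((Real.sqrt (x^2+y^2) : ℝ) : ℂ) *
        Complex.exp (Complex.I * ((Real.arctan (y/x) : ℝ) : ℂ)) := by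
  have hr : (0:ℝ) < Real.sqrt (x^2+y^2) := Real.sqrt_pos.mpr (by positivity)
  have hcos : Real.cos (Real.arctan (y/x)) = |x| / Real.sqrt (x^2+y^2) := by
    rw [Real.cos_arctan, aux_sqrt1 x y hx, one_div_div]
  have hsin : Real.sin (Real.arctan (y/x)) = Real.sign x * y / Real.sqrt (x^2+y^2) := by
    rw [Real.sin_arctan, aux_sqrt1 x y hx]
    rcases hx.lt_or_gt with h | h
    · rw [Real.sign_of_neg h, abs_of_neg h]; field_simp
    · rw [Real.sign_of_pos h, abs_of_pos h]; field_simp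
  rw [mul_comm Complex.I, Complex.exp_mul_I, ← Complex.ofReal_cos, ← Complex.ofReal_sin,
    hcos, hsin]
  rcases hx.lt_or_gt with h | h
  · rw [Real.sign_of_neg h, abs_of_neg h]
    rw [Complex.ext_iff]
    push_cast
    constructor <;> simp <;> field_simp
  · rw [Real.sign_of_pos h, abs_of_pos h]
    rw [Complex.ext_iff]
    push_cast
    constructor <;> simp <;> field_simp

lemma aux_abs_sign (t : ℝ) (ht : t ≠ 0) : |Real.sign t| = 1 := by
  rcases Real.sign_apply_eq_of_ne_zero t ht with h | h <;> rw [h] <;> norm_num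

lemma aux_sign_mul_abs (t : ℝ) : Real.sign t * |t| = t := by
  rcases lt_trichotomy t 0 with h | h | h
  · rw [Real.sign_of_neg h, abs_of_neg h]; ring
  · simp [h]
  · rw [Real.sign_of_pos h, abs_of_pos h]; ring

set_option maxHeartbeats 1000000 in
theorem stmt_15
    (m n : ℕ) (kG : ℝ) (hkG : kG ≠ 0)
    (σz ωz : Fin m → ℝ) (σp ωp : Fin n → ℝ)
    (σ0 : ℝ) (hσ0 : σ0 < 0)
    (hz : ∀ k, σz k ≠ σ0) (hp : ∀ i, σp i ≠ σ0)
    (G : ℂ → ℂ)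
    (hG : ∀ s : ℂ, G s =
      (kG : ℂ) * (∏ k : Fin m, (s - ((σz k : ℂ) + (ωz k : ℂ) * Complex.I))) /
        (∏ i : Fin n, (s - ((σp i : ℂ) + (ωp i : ℂ) * Complex.I))))
    (γz : Fin m → ℝ → ℝ)
    (hγz : ∀ (k : Fin m) (ω : ℝ), γz k ω = (σ0 - σz k) ^ 2 + (ω - ωz k) ^ 2)
    (γp : Fin n → ℝ → ℝ)
    (hγp : ∀ (i : Fin n) (ω : ℝ), γp i ω = (σ0 - σp i) ^ 2 + (ω - ωp i) ^ 2)
    (H : ℝ → ℝ)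
    (hH : ∀ ω : ℝ, H ω = Real.log (‖G ((σ0 : ℂ) + (ω : ℂ) * Complex.I)‖) / σ0)
    (Θ : ℝ → ℝ)
    (hΘ : ∀ ω : ℝ, Θ ω =
      (∑ k : Fin m, Real.arctan ((ω - ωz k) / (σ0 - σz k)))
        - ∑ i : Fin n, Real.arctan ((ω - ωp i) / (σ0 - σp i)))
    (φ : ℝ → ℝ) (hφ : ∀ ω : ℝ, φ ω = Θ ω - ω * H ω)
    : ∀ ω : ℝ,
      G ((σ0 : ℂ) + (ω : ℂ) * Complex.I) * ((‖G (σ0 : ℂ)‖ : ℝ) : ℂ) *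
          Complex.exp (Complex.I * ((Θ 0 : ℝ) : ℂ)) =
        G (σ0 : ℂ) * ((‖G ((σ0 : ℂ) + (ω : ℂ) * Complex.I)‖ : ℝ) : ℂ) *
          Complex.exp (Complex.I * ((Θ ω : ℝ) : ℂ)) := by
  have hz' : ∀ k, σ0 - σz k ≠ 0 := fun k => sub_ne_zero.mpr fun h => hz k h.symm
  have hp' : ∀ i, σ0 - σp i ≠ 0 := fun i => sub_ne_zero.mpr fun h => hp i h.symm
  set Sz : ℂ := ∏ k : Fin m, ((Real.sign (σ0 - σz k) : ℝ) : ℂ) with hSz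
  set Sp : ℂ := ∏ i : Fin n, ((Real.sign (σ0 - σp i) : ℝ) : ℂ) with hSp
  set C : ℂ := ((Real.sign kG : ℝ) : ℂ) * Sz / Sp with hC
  set X : ℝ → ℝ := fun ω =>
    |kG| * (∏ k : Fin m, Real.sqrt ((σ0 - σz k)^2 + (ω - ωz k)^2)) /
      ∏ i : Fin n, Real.sqrt ((σ0 - σp i)^2 + (ω - ωp i)^2) with hX
  have hSpne : Sp ≠ 0 := by
    rw [hSp]
    exact Finset.prod_ne_zero_iff.mpr fun i _ =>
      Complex.ofReal_ne_zero.mpr fun h => hp' i (Real.sign_eq_zero_iff.mp h)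
  have hSzne : Sz ≠ 0 := by
    rw [hSz]
    exact Finset.prod_ne_zero_iff.mpr fun k _ =>
      Complex.ofReal_ne_zero.mpr fun h => hz' k (Real.sign_eq_zero_iff.mp h)
  have hRz : ∀ ω : ℝ, (0:ℝ) < ∏ k : Fin m, Real.sqrt ((σ0 - σz k)^2 + (ω - ωz k)^2) := by
    intro ω
    exact Finset.prod_pos fun k _ => Real.sqrt_pos.mpr (by have := hz' k; positivity)
  have hRp : ∀ ω : ℝ, (0:ℝ) < ∏ i : Fin n, Real.sqrt ((σ0 - σp i)^2 + (ω - ωp i)^2) := by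
    intro ω
    exact Finset.prod_pos fun i _ => Real.sqrt_pos.mpr (by have := hp' i; positivity)
  have key1 : ∀ ω : ℝ, G ((σ0 : ℂ) + (ω : ℂ) * Complex.I) =
      C * ((X ω : ℝ) : ℂ) * Complex.exp (Complex.I * ((Θ ω : ℝ) : ℂ)) := by
    intro ω
    rw [hG, hΘ]
    have h1 : ∏ k : Fin m, (((σ0:ℂ) + (ω:ℂ)*Complex.I) - ((σz k : ℂ) + (ωz k : ℂ) * Complex.I))
        = Sz * ((∏ k : Fin m, Real.sqrt ((σ0 - σz k)^2 + (ω - ωz k)^2) : ℝ) : ℂ) *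
          Complex.exp (Complex.I *
            ((∑ k : Fin m, Real.arctan ((ω - ωz k)/(σ0 - σz k)) : ℝ) : ℂ)) := by
      rw [show (∏ k : Fin m, (((σ0:ℂ) + (ω:ℂ)*Complex.I) - ((σz k : ℂ) + (ωz k : ℂ) * Complex.I)))
          = ∏ k : Fin m, (((Real.sign (σ0 - σz k) : ℝ) : ℂ) *
            ((Real.sqrt ((σ0 - σz k)^2 + (ω - ωz k)^2) : ℝ) : ℂ) *
            Complex.exp (Complex.I * ((Real.arctan ((ω - ωz k)/(σ0 - σz k)) : ℝ) : ℂ))) from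
        Finset.prod_congr rfl fun k _ => by
          rw [show ((σ0:ℂ) + (ω:ℂ)*Complex.I) - ((σz k : ℂ) + (ωz k : ℂ) * Complex.I)
            = ((σ0 - σz k : ℝ) : ℂ) + ((ω - ωz k : ℝ) : ℂ) * Complex.I by push_cast; ring]
          exact aux_factor _ _ (hz' k)]
      simp only [Complex.ofReal_prod, Complex.ofReal_sum]
      rw [Finset.prod_mul_distrib, Finset.prod_mul_distrib, ← Complex.exp_sum, ← Finset.mul_sum]
    have h2 : ∏ i : Fin n, (((σ0:ℂ) + (ω:ℂ)*Complex.I) - ((σp i : ℂ) + (ωp i : ℂ) * Complex.I))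
        = Sp * ((∏ i : Fin n, Real.sqrt ((σ0 - σp i)^2 + (ω - ωp i)^2) : ℝ) : ℂ) *
          Complex.exp (Complex.I *
            ((∑ i : Fin n, Real.arctan ((ω - ωp i)/(σ0 - σp i)) : ℝ) : ℂ)) := by
      rw [show (∏ i : Fin n, (((σ0:ℂ) + (ω:ℂ)*Complex.I) - ((σp i : ℂ) + (ωp i : ℂ) * Complex.I)))
          = ∏ i : Fin n, (((Real.sign (σ0 - σp i) : ℝ) : ℂ) *
            ((Real.sqrt ((σ0 - σp i)^2 + (ω - ωp i)^2) : ℝ) : ℂ) *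
            Complex.exp (Complex.I * ((Real.arctan ((ω - ωp i)/(σ0 - σp i)) : ℝ) : ℂ))) from
        Finset.prod_congr rfl fun i _ => by
          rw [show ((σ0:ℂ) + (ω:ℂ)*Complex.I) - ((σp i : ℂ) + (ωp i : ℂ) * Complex.I)
            = ((σ0 - σp i : ℝ) : ℂ) + ((ω - ωp i : ℝ) : ℂ) * Complex.I by push_cast; ring]
          exact aux_factor _ _ (hp' i)]
      simp only [Complex.ofReal_prod, Complex.ofReal_sum]
      rw [Finset.prod_mul_distrib, Finset.prod_mul_distrib, ← Complex.exp_sum, ← Finset.mul_sum]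
    rw [h1, h2, hC, hX]
    have hkG2 : (kG : ℂ) = ((Real.sign kG : ℝ) : ℂ) * ((|kG| : ℝ) : ℂ) := by
      rw [← Complex.ofReal_mul, aux_sign_mul_abs]
    rw [hkG2]
    have hesub : Complex.I * ((((∑ k : Fin m, Real.arctan ((ω - ωz k)/(σ0 - σz k)))
        - ∑ i : Fin n, Real.arctan ((ω - ωp i)/(σ0 - σp i)) : ℝ)) : ℂ)
        = Complex.I * ((∑ k : Fin m, Real.arctan ((ω - ωz k)/(σ0 - σz k)) : ℝ) : ℂ)
          - Complex.I * ((∑ i : Fin n, Real.arctan ((ω - ωp i)/(σ0 - σp i)) : ℝ) : ℂ) := by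
      push_cast; ring
    rw [hesub, Complex.exp_sub]
    have hRzc : ((∏ k : Fin m, Real.sqrt ((σ0 - σz k)^2 + (ω - ωz k)^2) : ℝ) : ℂ) ≠ 0 :=
      Complex.ofReal_ne_zero.mpr (hRz ω).ne'
    have hRpc : ((∏ i : Fin n, Real.sqrt ((σ0 - σp i)^2 + (ω - ωp i)^2) : ℝ) : ℂ) ≠ 0 :=
      Complex.ofReal_ne_zero.mpr (hRp ω).ne'
    rw [Complex.ofReal_div, Complex.ofReal_mul]
    field_simp [hSpne, hRpc, Complex.exp_ne_zero]
  have habsC : ‖C‖ = 1 := by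
    rw [hC, norm_div, norm_mul, hSz, hSp, norm_prod, norm_prod]
    rw [Complex.norm_real, Real.norm_eq_abs, aux_abs_sign _ hkG]
    rw [show (∏ k : Fin m, ‖((Real.sign (σ0 - σz k) : ℝ) : ℂ)‖) = 1 from
      Finset.prod_eq_one fun k _ => by rw [Complex.norm_real, Real.norm_eq_abs, aux_abs_sign _ (hz' k)]]
    rw [show (∏ i : Fin n, ‖((Real.sign (σ0 - σp i) : ℝ) : ℂ)‖) = 1 from
      Finset.prod_eq_one fun i _ => by rw [Complex.norm_real, Real.norm_eq_abs, aux_abs_sign _ (hp' i)]]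
    norm_num
  have hXpos : ∀ ω : ℝ, 0 < X ω := by
    intro ω
    rw [hX]
    have := hRz ω; have := hRp ω
    positivity
  have key2 : ∀ ω : ℝ, ‖G ((σ0 : ℂ) + (ω : ℂ) * Complex.I)‖ = X ω := by
    intro ω
    rw [key1 ω, norm_mul, norm_mul, habsC, Complex.norm_real, Real.norm_eq_abs, abs_of_pos (hXpos ω),
      mul_comm Complex.I, Complex.norm_exp_ofReal_mul_I, one_mul, mul_one]
  intro ω
  have e0 : (σ0 : ℂ) = (σ0 : ℂ) + ((0:ℝ) : ℂ) * Complex.I := by simp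
  rw [key2 ω, show ‖G (σ0 : ℂ)‖ = X 0 from by rw [e0]; exact key2 0]
  rw [show G (σ0 : ℂ) = G ((σ0 : ℂ) + ((0:ℝ) : ℂ) * Complex.I) from by rw [← e0],
    key1 ω, key1 0]
  ring
end

section
/- (Bi-proper asymptotics.) Suppose m = n (the plant is bi-proper, with high-frequency gain d = k_G). Then H(ω) → ln|k_G| / σ₀ and σ₀·φ′(ω) → −ln|k_G| = ln(1/|k_G|) as ω → +∞. -/
open Complex Real Filter Finset Set

lemma aux_gamma_top (c a : ℝ) : Filter.Tendsto (fun ω => c^2 + (ω-a)^2) atTop atTop := by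
  apply tendsto_atTop_add_const_left
  have : Filter.Tendsto (fun ω : ℝ => ω - a) atTop atTop := tendsto_atTop_add_const_right _ _ tendsto_id
  exact (tendsto_pow_atTop (by norm_num)).comp this

lemma aux_inv_zero (c a b : ℝ) : Filter.Tendsto (fun ω => b / (c^2 + (ω-a)^2)) atTop (nhds 0) := by
  simpa [div_eq_mul_inv] using ((aux_gamma_top c a).inv_tendsto_atTop).const_mul b

lemma aux_main (c a : ℝ) : Filter.Tendsto (fun ω => ω * (ω - a) / (c^2 + (ω-a)^2)) atTop (nhds 1) := by
  have hg : Filter.Tendsto (fun t : ℝ => (1 - a*t) / ((c*t)^2 + (1 - a*t)^2)) (nhds 0) (nhds 1) := by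
    have : ContinuousAt (fun t : ℝ => (1 - a*t) / ((c*t)^2 + (1 - a*t)^2)) 0 := by
      apply ContinuousAt.div (by fun_prop) (by fun_prop); norm_num
    simpa using this.tendsto
  have h := hg.comp tendsto_inv_atTop_zero
  apply h.congr'
  filter_upwards [eventually_ge_atTop (|a| + 1)] with ω hω
  have hω1 : (1:ℝ) ≤ ω - |a| := by linarith
  have hωpos : 0 < ω := lt_of_lt_of_le (by positivity) hω
  have h1 : 0 < 1 - a * ω⁻¹ := by
    have h0 : a * ω⁻¹ ≤ |a| * ω⁻¹ :=
      mul_le_mul_of_nonneg_right (le_abs_self a) (by positivity)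
    have h2 : |a| * ω⁻¹ < 1 := by
      rw [mul_inv_lt_iff₀' hωpos]; linarith
    linarith
  have hden : (c*ω⁻¹)^2 + (1 - a*ω⁻¹)^2 ≠ 0 := by positivity
  have hden2 : c^2 + (ω-a)^2 ≠ 0 := by
    have : 0 < ω - a := by have := le_abs_self a; linarith
    positivity
  simp only [Function.comp]
  field_simp

lemma aux_ratio (c1 a1 c2 a2 : ℝ) :
    Filter.Tendsto (fun ω => (c1^2 + (ω-a1)^2) / (c2^2 + (ω-a2)^2)) atTop (nhds 1) := by
  have hg : Filter.Tendsto (fun t : ℝ => ((c1*t)^2 + (1 - a1*t)^2) / ((c2*t)^2 + (1 - a2*t)^2))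
      (nhds 0) (nhds 1) := by
    have : ContinuousAt (fun t : ℝ => ((c1*t)^2 + (1 - a1*t)^2) / ((c2*t)^2 + (1 - a2*t)^2)) 0 := by
      apply ContinuousAt.div (by fun_prop) (by fun_prop); norm_num
    simpa using this.tendsto
  have h := hg.comp tendsto_inv_atTop_zero
  apply h.congr'
  filter_upwards [eventually_ge_atTop (|a1| + |a2| + 1)] with ω hω
  have hωpos : 0 < ω := lt_of_lt_of_le (by positivity) hω
  have h1 : 0 < 1 - a2 * ω⁻¹ := by
    have h0 : a2 * ω⁻¹ ≤ |a2| * ω⁻¹ :=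
      mul_le_mul_of_nonneg_right (le_abs_self a2) (by positivity)
    have h2 : |a2| * ω⁻¹ < 1 := by
      rw [mul_inv_lt_iff₀' hωpos]
      have := abs_nonneg a1
      linarith
    linarith
  have hden : (c2*ω⁻¹)^2 + (1 - a2*ω⁻¹)^2 ≠ 0 := by positivity
  have hden2 : c2^2 + (ω-a2)^2 ≠ 0 := by
    have h3 : 0 < ω - a2 := by
      have := le_abs_self a2
      have := abs_nonneg a1
      linarith
    positivity
  simp only [Function.comp]
  field_simp

lemma aux_log_diff (c1 a1 c2 a2 : ℝ) (hc1 : c1 ≠ 0) (hc2 : c2 ≠ 0) :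
    Filter.Tendsto (fun ω => Real.log (c1^2 + (ω-a1)^2) - Real.log (c2^2 + (ω-a2)^2))
      atTop (nhds 0) := by
  have h := (Real.continuousAt_log (by norm_num : (1:ℝ) ≠ 0)).tendsto.comp
    (aux_ratio c1 a1 c2 a2)
  simp only [Real.log_one] at h
  apply h.congr
  intro ω
  simp only [Function.comp]
  rw [Real.log_div (by positivity) (by positivity)]

lemma aux_arctan_deriv (c a ω : ℝ) (hc : c ≠ 0) :
    HasDerivAt (fun ω => Real.arctan ((ω - a)/c)) (c/(c^2 + (ω-a)^2)) ω := by
  have h1 : HasDerivAt (fun ω : ℝ => (ω - a)/c) (1/c) ω :=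
    ((hasDerivAt_id ω).sub_const a).div_const c
  have h2 := (Real.hasDerivAt_arctan ((ω - a)/c)).comp ω h1
  refine h2.congr_deriv ?_
  have : 0 < c^2 + (ω-a)^2 := by positivity
  field_simp

lemma aux_log_deriv (c a ω : ℝ) (hc : c ≠ 0) :
    HasDerivAt (fun ω => Real.log (c^2 + (ω - a)^2)) (2*(ω-a)/(c^2 + (ω-a)^2)) ω := by
  have h1 : HasDerivAt (fun ω : ℝ => c^2 + (ω - a)^2) (2*(ω-a)) ω := by
    have := (((hasDerivAt_id ω).sub_const a).pow 2).const_add (c^2)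
    simpa using this
  exact h1.log (by positivity)

lemma aux_log_prod (m : ℕ) (σz ωz : Fin m → ℝ) (σ0 : ℝ)
    (hz : ∀ k, σz k ≠ σ0) (ω : ℝ) :
    Real.log (‖∏ k : Fin m,
        (((σ0 : ℂ) + (ω:ℂ)*Complex.I) - ((σz k : ℂ) + (ωz k : ℂ) * Complex.I))‖)
      = (∑ k : Fin m, Real.log ((σ0 - σz k)^2 + (ω - ωz k)^2)) / 2 := by
  have hne : ∀ k : Fin m,
      (((σ0 : ℂ) + (ω:ℂ)*Complex.I) - ((σz k : ℂ) + (ωz k : ℂ) * Complex.I)) ≠ 0 := by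
    intro k h
    have := congrArg Complex.re h
    simp at this
    exact hz k (by linarith)
  rw [norm_prod, Real.log_prod (fun k _ => norm_ne_zero_iff.2 (hne k)),
    Finset.sum_div]
  congr 1
  funext k
  rw [Complex.norm_def, Real.log_sqrt (Complex.normSq_nonneg _)]
  congr 2
  simp [Complex.normSq_apply]
  ring

theorem stmt_16
    (m n : ℕ) (kG : ℝ) (hkG : kG ≠ 0)
    (σz ωz : Fin m → ℝ) (σp ωp : Fin n → ℝ)
    (σ0 : ℝ) (hσ0 : σ0 < 0)
    (hz : ∀ k, σz k ≠ σ0) (hp : ∀ i, σp i ≠ σ0)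
    (G : ℂ → ℂ)
    (hG : ∀ s : ℂ, G s =
      (kG : ℂ) * (∏ k : Fin m, (s - ((σz k : ℂ) + (ωz k : ℂ) * Complex.I))) /
        (∏ i : Fin n, (s - ((σp i : ℂ) + (ωp i : ℂ) * Complex.I))))
    (γz : Fin m → ℝ → ℝ)
    (hγz : ∀ (k : Fin m) (ω : ℝ), γz k ω = (σ0 - σz k) ^ 2 + (ω - ωz k) ^ 2)
    (γp : Fin n → ℝ → ℝ)
    (hγp : ∀ (i : Fin n) (ω : ℝ), γp i ω = (σ0 - σp i) ^ 2 + (ω - ωp i) ^ 2)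
    (H : ℝ → ℝ)
    (hH : ∀ ω : ℝ, H ω = Real.log (‖G ((σ0 : ℂ) + (ω : ℂ) * Complex.I)‖) / σ0)
    (Θ : ℝ → ℝ)
    (hΘ : ∀ ω : ℝ, Θ ω =
      (∑ k : Fin m, Real.arctan ((ω - ωz k) / (σ0 - σz k)))
        - ∑ i : Fin n, Real.arctan ((ω - ωp i) / (σ0 - σp i)))
    (φ : ℝ → ℝ) (hφ : ∀ ω : ℝ, φ ω = Θ ω - ω * H ω)
    (hmn : m = n)
    : Filter.Tendsto H Filter.atTop (nhds (Real.log |kG| / σ0)) ∧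
      Filter.Tendsto (fun ω => σ0 * deriv φ ω) Filter.atTop (nhds (-Real.log |kG|)) := by
  subst hmn
  have hσ0' : σ0 ≠ 0 := ne_of_lt hσ0
  have hcz : ∀ k, σ0 - σz k ≠ 0 := fun k => sub_ne_zero.2 (Ne.symm (hz k))
  have hcp : ∀ i, σ0 - σp i ≠ 0 := fun i => sub_ne_zero.2 (Ne.symm (hp i))
  -- explicit formula for H
  have hH2 : ∀ ω : ℝ, H ω =
      (Real.log |kG| + (∑ k : Fin m, Real.log ((σ0 - σz k)^2 + (ω - ωz k)^2)) / 2
        - (∑ i : Fin m, Real.log ((σ0 - σp i)^2 + (ω - ωp i)^2)) / 2) / σ0 := by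
    intro ω
    have hneP : (∏ k : Fin m,
        (((σ0 : ℂ) + (ω:ℂ)*Complex.I) - ((σz k : ℂ) + (ωz k : ℂ) * Complex.I))) ≠ 0 := by
      apply Finset.prod_ne_zero_iff.2
      intro k _ h
      have := congrArg Complex.re h
      simp at this
      exact hz k (by linarith)
    have hneQ : (∏ i : Fin m,
        (((σ0 : ℂ) + (ω:ℂ)*Complex.I) - ((σp i : ℂ) + (ωp i : ℂ) * Complex.I))) ≠ 0 := by
      apply Finset.prod_ne_zero_iff.2
      intro i _ h
      have := congrArg Complex.re h
      simp at this
      exact hp i (by linarith)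
    rw [hH, hG]
    rw [norm_div, norm_mul, Complex.norm_real, Real.norm_eq_abs]
    rw [Real.log_div (by
        exact mul_ne_zero (abs_ne_zero.2 hkG) (norm_ne_zero_iff.2 hneP))
      (norm_ne_zero_iff.2 hneQ)]
    rw [Real.log_mul (abs_ne_zero.2 hkG) (norm_ne_zero_iff.2 hneP)]
    rw [aux_log_prod m σz ωz σ0 hz ω, aux_log_prod m σp ωp σ0 hp ω]
  -- Part 1 : limit of H
  have hdiff : Filter.Tendsto (fun ω => (∑ k : Fin m, Real.log ((σ0 - σz k)^2 + (ω - ωz k)^2))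
      - ∑ i : Fin m, Real.log ((σ0 - σp i)^2 + (ω - ωp i)^2)) atTop (nhds 0) := by
    have h := tendsto_finset_sum (Finset.univ : Finset (Fin m))
      (fun k _ => aux_log_diff (σ0 - σz k) (ωz k) (σ0 - σp k) (ωp k) (hcz k) (hcp k))
    simp only [Finset.sum_const_zero] at h
    apply h.congr
    intro ω
    rw [Finset.sum_sub_distrib]
  have part1 : Filter.Tendsto H atTop (nhds (Real.log |kG| / σ0)) := by
    have h := (tendsto_const_nhds (x := Real.log |kG| / σ0) (f := (atTop : Filter ℝ))).add
      (hdiff.div_const (2*σ0))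
    simp only [zero_div, add_zero] at h
    apply h.congr
    intro ω
    rw [hH2 ω]
    field_simp
    ring
  refine ⟨part1, ?_⟩
  -- Part 2 : limit of σ0 * deriv φ
  -- derivative of φ
  have hφeq : φ = fun ω =>
      ((∑ k : Fin m, Real.arctan ((ω - ωz k) / (σ0 - σz k)))
        - ∑ i : Fin m, Real.arctan ((ω - ωp i) / (σ0 - σp i)))
      - ω * ((Real.log |kG| + (∑ k : Fin m, Real.log ((σ0 - σz k)^2 + (ω - ωz k)^2)) / 2
        - (∑ i : Fin m, Real.log ((σ0 - σp i)^2 + (ω - ωp i)^2)) / 2) / σ0) := by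
    funext ω
    rw [hφ, hΘ, hH2]
  have hD : ∀ ω : ℝ, HasDerivAt φ
      (((∑ k : Fin m, (σ0 - σz k)/((σ0 - σz k)^2 + (ω - ωz k)^2))
        - ∑ i : Fin m, (σ0 - σp i)/((σ0 - σp i)^2 + (ω - ωp i)^2))
       - ((Real.log |kG| + (∑ k : Fin m, Real.log ((σ0 - σz k)^2 + (ω - ωz k)^2)) / 2
        - (∑ i : Fin m, Real.log ((σ0 - σp i)^2 + (ω - ωp i)^2)) / 2) / σ0
         + ω * ((((∑ k : Fin m, 2*(ω - ωz k)/((σ0 - σz k)^2 + (ω - ωz k)^2)) / 2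
            - (∑ i : Fin m, 2*(ω - ωp i)/((σ0 - σp i)^2 + (ω - ωp i)^2)) / 2)) / σ0))) ω := by
    intro ω
    rw [hφeq]
    have hΘd : HasDerivAt (fun ω =>
        (∑ k : Fin m, Real.arctan ((ω - ωz k) / (σ0 - σz k)))
          - ∑ i : Fin m, Real.arctan ((ω - ωp i) / (σ0 - σp i)))
        ((∑ k : Fin m, (σ0 - σz k)/((σ0 - σz k)^2 + (ω - ωz k)^2))
          - ∑ i : Fin m, (σ0 - σp i)/((σ0 - σp i)^2 + (ω - ωp i)^2)) ω :=
      (HasDerivAt.fun_sum (fun k _ => aux_arctan_deriv (σ0 - σz k) (ωz k) ω (hcz k))).sub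
        (HasDerivAt.fun_sum (fun i _ => aux_arctan_deriv (σ0 - σp i) (ωp i) ω (hcp i)))
    have hHd : HasDerivAt (fun ω =>
        (Real.log |kG| + (∑ k : Fin m, Real.log ((σ0 - σz k)^2 + (ω - ωz k)^2)) / 2
          - (∑ i : Fin m, Real.log ((σ0 - σp i)^2 + (ω - ωp i)^2)) / 2) / σ0)
        ((((∑ k : Fin m, 2*(ω - ωz k)/((σ0 - σz k)^2 + (ω - ωz k)^2)) / 2
            - (∑ i : Fin m, 2*(ω - ωp i)/((σ0 - σp i)^2 + (ω - ωp i)^2)) / 2)) / σ0) ω :=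
      ((((HasDerivAt.fun_sum (fun k _ => aux_log_deriv (σ0 - σz k) (ωz k) ω (hcz k))).div_const
          2).const_add (Real.log |kG|)).sub
        ((HasDerivAt.fun_sum (fun i _ => aux_log_deriv (σ0 - σp i) (ωp i) ω (hcp i))).div_const
          2)).div_const σ0
    have h := hΘd.sub ((hasDerivAt_id ω).mul hHd)
    refine h.congr_deriv ?_
    simp only [id_eq, one_mul]
  -- rewrite derivative sums
  have sum2 : ∀ (aω cσ : Fin m → ℝ) (ω : ℝ),
      ω * ((∑ k : Fin m, 2*(ω - aω k)/((cσ k)^2 + (ω - aω k)^2)) / 2)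
        = ∑ k : Fin m, ω * (ω - aω k)/((cσ k)^2 + (ω - aω k)^2) := by
    intro aω cσ ω
    rw [mul_div_assoc', Finset.mul_sum, Finset.sum_div]
    apply Finset.sum_congr rfl
    intro k _
    ring
  -- limits of pieces
  have h1 : Filter.Tendsto (fun ω => ∑ k : Fin m, (σ0 - σz k)/((σ0 - σz k)^2 + (ω - ωz k)^2))
      atTop (nhds 0) := by
    have h := tendsto_finset_sum (Finset.univ : Finset (Fin m))
      (fun k _ => aux_inv_zero (σ0 - σz k) (ωz k) (σ0 - σz k))
    simpa using h
  have h2 : Filter.Tendsto (fun ω => ∑ i : Fin m, (σ0 - σp i)/((σ0 - σp i)^2 + (ω - ωp i)^2))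
      atTop (nhds 0) := by
    have h := tendsto_finset_sum (Finset.univ : Finset (Fin m))
      (fun i _ => aux_inv_zero (σ0 - σp i) (ωp i) (σ0 - σp i))
    simpa using h
  have h4 : Filter.Tendsto (fun ω => ∑ k : Fin m, ω * (ω - ωz k)/((σ0 - σz k)^2 + (ω - ωz k)^2))
      atTop (nhds (m : ℝ)) := by
    have h := tendsto_finset_sum (Finset.univ : Finset (Fin m))
      (fun k _ => aux_main (σ0 - σz k) (ωz k))
    simpa using h
  have h5 : Filter.Tendsto (fun ω => ∑ i : Fin m, ω * (ω - ωp i)/((σ0 - σp i)^2 + (ω - ωp i)^2))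
      atTop (nhds (m : ℝ)) := by
    have h := tendsto_finset_sum (Finset.univ : Finset (Fin m))
      (fun i _ => aux_main (σ0 - σp i) (ωp i))
    simpa using h
  have part1' : Filter.Tendsto (fun ω =>
      (Real.log |kG| + (∑ k : Fin m, Real.log ((σ0 - σz k)^2 + (ω - ωz k)^2)) / 2
        - (∑ i : Fin m, Real.log ((σ0 - σp i)^2 + (ω - ωp i)^2)) / 2) / σ0)
      atTop (nhds (Real.log |kG| / σ0)) :=
    part1.congr hH2
  have hbig : Filter.Tendsto (fun ω =>
      ((∑ k : Fin m, (σ0 - σz k)/((σ0 - σz k)^2 + (ω - ωz k)^2))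
        - ∑ i : Fin m, (σ0 - σp i)/((σ0 - σp i)^2 + (ω - ωp i)^2))
       - ((Real.log |kG| + (∑ k : Fin m, Real.log ((σ0 - σz k)^2 + (ω - ωz k)^2)) / 2
        - (∑ i : Fin m, Real.log ((σ0 - σp i)^2 + (ω - ωp i)^2)) / 2) / σ0
         + (((∑ k : Fin m, ω * (ω - ωz k)/((σ0 - σz k)^2 + (ω - ωz k)^2))
            - ∑ i : Fin m, ω * (ω - ωp i)/((σ0 - σp i)^2 + (ω - ωp i)^2)) / σ0)))
      atTop (nhds (-(Real.log |kG| / σ0))) := by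
    have h := (h1.sub h2).sub (part1'.add ((h4.sub h5).div_const σ0))
    have : (0 : ℝ) - 0 - (Real.log |kG| / σ0 + ((m : ℝ) - m)/σ0) = -(Real.log |kG| / σ0) := by
      ring
    rwa [this] at h
  have hfinal := hbig.const_mul σ0
  have hval : σ0 * -(Real.log |kG| / σ0) = -Real.log |kG| := by
    field_simp
  rw [hval] at hfinal
  apply hfinal.congr
  intro ω
  congr 1
  rw [(hD ω).deriv, ← sum2 ωz (fun k => σ0 - σz k) ω, ← sum2 ωp (fun i => σ0 - σp i) ω]
  ring
end

section
/- (Strictly proper asymptotics.) Suppose m < n (the plant is strictly proper). Then H(ω) → +∞ and σ₀·φ′(ω) → +∞ as ω → +∞; in particular there exists Ω such that φ′(ω) < 0 for all ω > Ω, so every characteristic root crossing the line Re(s) = σ₀ at sufficiently high frequency enters the region Re(s) ≥ σ₀. -/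
open Complex Real Filter Finset Set

lemma st17_gpos (t c ω : ℝ) (ht : t ≠ 0) : 0 < t ^ 2 + (ω - c) ^ 2 := by positivity

lemma st17_g_lim (t c : ℝ) :
    Tendsto (fun ω : ℝ => t ^ 2 * (ω⁻¹) ^ 2 + (1 - c * ω⁻¹) ^ 2) atTop (nhds 1) := by
  have h0 : Tendsto (fun ω : ℝ => ω⁻¹) atTop (nhds 0) := tendsto_inv_atTop_zero
  have : Tendsto (fun ω : ℝ => t ^ 2 * (ω⁻¹) ^ 2 + (1 - c * ω⁻¹) ^ 2) atTop
      (nhds (t ^ 2 * 0 ^ 2 + (1 - c * 0) ^ 2)) := by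
    exact ((tendsto_const_nhds.mul (h0.pow 2)).add
      ((tendsto_const_nhds.sub (tendsto_const_nhds.mul h0)).pow 2))
  simpa using this

lemma st17_log_asymp (t c : ℝ) (ht : t ≠ 0) :
    Tendsto (fun ω : ℝ => Real.log (t ^ 2 + (ω - c) ^ 2) / 2 - Real.log ω) atTop (nhds 0) := by
  have hg := st17_g_lim t c
  have hlog : Tendsto (fun ω : ℝ => Real.log (t ^ 2 * (ω⁻¹) ^ 2 + (1 - c * ω⁻¹) ^ 2) / 2)
      atTop (nhds 0) := by
    have := ((Real.continuousAt_log one_ne_zero).tendsto.comp hg).div_const 2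
    simpa using this
  refine hlog.congr' ?_
  filter_upwards [eventually_gt_atTop (0 : ℝ)] with ω hω
  have hγ : (0:ℝ) < t ^ 2 + (ω - c) ^ 2 := st17_gpos t c ω ht
  have hrw : t ^ 2 * (ω⁻¹) ^ 2 + (1 - c * ω⁻¹) ^ 2 = (t ^ 2 + (ω - c) ^ 2) / ω ^ 2 := by
    field_simp
  rw [hrw, Real.log_div hγ.ne' (by positivity), Real.log_pow]
  push_cast
  ring_nf

lemma st17_frac_lim (t c : ℝ) (ht : t ≠ 0) :
    Tendsto (fun ω : ℝ => t / (t ^ 2 + (ω - c) ^ 2)) atTop (nhds 0) := by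
  have h : Tendsto (fun ω : ℝ => t ^ 2 + (ω - c) ^ 2) atTop atTop := by
    apply tendsto_atTop_add_const_left
    have := (tendsto_atTop_add_const_right atTop (-c) tendsto_id :
        Tendsto (fun ω : ℝ => ω + (-c)) atTop atTop)
    have h2 := this.atTop_mul_atTop₀ this
    refine h2.congr fun ω => by ring
  exact tendsto_const_nhds.div_atTop h

lemma st17_omega_frac_lim (t c : ℝ) (ht : t ≠ 0) :
    Tendsto (fun ω : ℝ => ω * (ω - c) / (t ^ 2 + (ω - c) ^ 2)) atTop (nhds 1) := by
  have hg := st17_g_lim t c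
  have h0 : Tendsto (fun ω : ℝ => ω⁻¹) atTop (nhds 0) := tendsto_inv_atTop_zero
  have hnum : Tendsto (fun ω : ℝ => 1 - c * ω⁻¹) atTop (nhds 1) := by
    have h1 : Tendsto (fun ω : ℝ => c * ω⁻¹) atTop (nhds 0) := by
      simpa using h0.const_mul c
    simpa using (tendsto_const_nhds.sub h1 :
      Tendsto (fun ω : ℝ => 1 - c * ω⁻¹) atTop (nhds (1 - 0)))
  have h := hnum.div hg one_ne_zero
  rw [div_one] at h
  refine h.congr' ?_
  filter_upwards [eventually_gt_atTop (0 : ℝ)] with ω hω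
  have hγ : (0:ℝ) < t ^ 2 + (ω - c) ^ 2 := st17_gpos t c ω ht
  simp only [Pi.div_apply]
  field_simp

lemma st17_hasDerivAt_arctan (t c ω : ℝ) (ht : t ≠ 0) :
    HasDerivAt (fun x : ℝ => Real.arctan ((x - c) / t)) (t / (t ^ 2 + (ω - c) ^ 2)) ω := by
  have h1 : HasDerivAt (fun x : ℝ => (x - c) / t) (1 / t) ω := by
    simpa using ((hasDerivAt_id ω).sub_const c).div_const t
  have h2 := (Real.hasDerivAt_arctan ((ω - c) / t)).comp ω h1
  refine h2.congr_deriv ?_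
  have hγ : (0:ℝ) < t ^ 2 + (ω - c) ^ 2 := st17_gpos t c ω ht
  field_simp

lemma st17_hasDerivAt_log (t c ω : ℝ) (ht : t ≠ 0) :
    HasDerivAt (fun x : ℝ => Real.log (t ^ 2 + (x - c) ^ 2))
      (2 * (ω - c) / (t ^ 2 + (ω - c) ^ 2)) ω := by
  have h1 : HasDerivAt (fun x : ℝ => t ^ 2 + (x - c) ^ 2) (2 * (ω - c)) ω := by
    have := (((hasDerivAt_id ω).sub_const c).pow 2).const_add (t ^ 2)
    simpa [mul_comm] using this
  have h2 := (Real.hasDerivAt_log (st17_gpos t c ω ht).ne').comp ω h1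
  refine h2.congr_deriv ?_
  field_simp

lemma st17_hasDerivAt_halflog (t c ω : ℝ) (ht : t ≠ 0) :
    HasDerivAt (fun x : ℝ => Real.log (t ^ 2 + (x - c) ^ 2) / 2)
      ((ω - c) / (t ^ 2 + (ω - c) ^ 2)) ω := by
  have h := (st17_hasDerivAt_log t c ω ht).div_const 2
  refine h.congr_deriv ?_
  have hγ : (0:ℝ) < t ^ 2 + (ω - c) ^ 2 := st17_gpos t c ω ht
  field_simp

theorem stmt_17
    (m n : ℕ) (kG : ℝ) (hkG : kG ≠ 0)
    (σz ωz : Fin m → ℝ) (σp ωp : Fin n → ℝ)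
    (σ0 : ℝ) (hσ0 : σ0 < 0)
    (hz : ∀ k, σz k ≠ σ0) (hp : ∀ i, σp i ≠ σ0)
    (G : ℂ → ℂ)
    (hG : ∀ s : ℂ, G s =
      (kG : ℂ) * (∏ k : Fin m, (s - ((σz k : ℂ) + (ωz k : ℂ) * Complex.I))) /
        (∏ i : Fin n, (s - ((σp i : ℂ) + (ωp i : ℂ) * Complex.I))))
    (γz : Fin m → ℝ → ℝ)
    (hγz : ∀ (k : Fin m) (ω : ℝ), γz k ω = (σ0 - σz k) ^ 2 + (ω - ωz k) ^ 2)
    (γp : Fin n → ℝ → ℝ)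
    (hγp : ∀ (i : Fin n) (ω : ℝ), γp i ω = (σ0 - σp i) ^ 2 + (ω - ωp i) ^ 2)
    (H : ℝ → ℝ)
    (hH : ∀ ω : ℝ, H ω = Real.log ‖G ((σ0 : ℂ) + (ω : ℂ) * Complex.I)‖ / σ0)
    (Θ : ℝ → ℝ)
    (hΘ : ∀ ω : ℝ, Θ ω =
      (∑ k : Fin m, Real.arctan ((ω - ωz k) / (σ0 - σz k)))
        - ∑ i : Fin n, Real.arctan ((ω - ωp i) / (σ0 - σp i)))
    (φ : ℝ → ℝ) (hφ : ∀ ω : ℝ, φ ω = Θ ω - ω * H ω)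
    (hmn : m < n)
    : Filter.Tendsto H Filter.atTop Filter.atTop ∧
      Filter.Tendsto (fun ω => σ0 * deriv φ ω) Filter.atTop Filter.atTop ∧
      ∃ Ω : ℝ, ∀ ω : ℝ, Ω < ω → deriv φ ω < 0 := by
  have htz0 : ∀ k, σ0 - σz k ≠ 0 := fun k => sub_ne_zero.mpr (Ne.symm (hz k))
  have htp0 : ∀ i, σ0 - σp i ≠ 0 := fun i => sub_ne_zero.mpr (Ne.symm (hp i))
  have hgz : ∀ (k : Fin m) (x : ℝ), (0:ℝ) < (σ0 - σz k) ^ 2 + (x - ωz k) ^ 2 :=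
    fun k x => st17_gpos _ _ x (htz0 k)
  have hgp : ∀ (i : Fin n) (x : ℝ), (0:ℝ) < (σ0 - σp i) ^ 2 + (x - ωp i) ^ 2 :=
    fun i x => st17_gpos _ _ x (htp0 i)
  -- explicit formula for |G|
  have habs : ∀ ω : ℝ, ‖G ((σ0 : ℂ) + (ω : ℂ) * Complex.I)‖ =
      |kG| * (∏ k : Fin m, Real.sqrt ((σ0 - σz k) ^ 2 + (ω - ωz k) ^ 2)) /
        (∏ i : Fin n, Real.sqrt ((σ0 - σp i) ^ 2 + (ω - ωp i) ^ 2)) := by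
    intro ω
    rw [hG]
    simp only [norm_div, norm_mul, norm_prod, Complex.norm_real, Real.norm_eq_abs]
    congr 1
    · congr 1
      refine Finset.prod_congr rfl fun k _ => ?_
      have he : (σ0:ℂ) + (ω:ℂ) * Complex.I - ((σz k : ℂ) + (ωz k : ℂ) * Complex.I)
          = ((σ0 - σz k : ℝ) : ℂ) + ((ω - ωz k : ℝ) : ℂ) * Complex.I := by
        push_cast; ring
      rw [he, Complex.norm_add_mul_I]
    · refine Finset.prod_congr rfl fun i _ => ?_
      have he : (σ0:ℂ) + (ω:ℂ) * Complex.I - ((σp i : ℂ) + (ωp i : ℂ) * Complex.I)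
          = ((σ0 - σp i : ℝ) : ℂ) + ((ω - ωp i : ℝ) : ℂ) * Complex.I := by
        push_cast; ring
      rw [he, Complex.norm_add_mul_I]
  -- explicit formula for H
  have hHf : ∀ ω : ℝ, H ω =
      (Real.log |kG| + (∑ k : Fin m, Real.log ((σ0 - σz k) ^ 2 + (ω - ωz k) ^ 2) / 2)
        - ∑ i : Fin n, Real.log ((σ0 - σp i) ^ 2 + (ω - ωp i) ^ 2) / 2) / σ0 := by
    intro ω
    have hP : (0:ℝ) < ∏ k : Fin m, Real.sqrt ((σ0 - σz k) ^ 2 + (ω - ωz k) ^ 2) :=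
      Finset.prod_pos fun k _ => Real.sqrt_pos.mpr (hgz k ω)
    have hQ : (0:ℝ) < ∏ i : Fin n, Real.sqrt ((σ0 - σp i) ^ 2 + (ω - ωp i) ^ 2) :=
      Finset.prod_pos fun i _ => Real.sqrt_pos.mpr (hgp i ω)
    rw [hH ω, habs ω,
      Real.log_div (mul_ne_zero (abs_ne_zero.mpr hkG) hP.ne') hQ.ne',
      Real.log_mul (abs_ne_zero.mpr hkG) hP.ne',
      Real.log_prod (fun k _ => (Real.sqrt_pos.mpr (hgz k ω)).ne'),
      Real.log_prod (fun i _ => (Real.sqrt_pos.mpr (hgp i ω)).ne')]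
    congr 1
    · congr 1
      · congr 1
        exact Finset.sum_congr rfl fun k _ => Real.log_sqrt (hgz k ω).le
      · exact Finset.sum_congr rfl fun i _ => Real.log_sqrt (hgp i ω).le
  -- Part 1 : H tends to atTop
  have hHtends : Tendsto H atTop atTop := by
    have hE : Tendsto (fun ω : ℝ =>
        (∑ k : Fin m, Real.log ((σ0 - σz k) ^ 2 + (ω - ωz k) ^ 2) / 2)
          - ∑ i : Fin n, Real.log ((σ0 - σp i) ^ 2 + (ω - ωp i) ^ 2) / 2) atTop atBot := by
      have h1 : Tendsto (fun ω : ℝ =>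
          ∑ k : Fin m, (Real.log ((σ0 - σz k) ^ 2 + (ω - ωz k) ^ 2) / 2 - Real.log ω))
          atTop (nhds 0) := by
        have := tendsto_finset_sum (Finset.univ : Finset (Fin m))
          (fun k _ => st17_log_asymp (σ0 - σz k) (ωz k) (htz0 k))
        simpa using this
      have h2 : Tendsto (fun ω : ℝ =>
          ∑ i : Fin n, (Real.log ((σ0 - σp i) ^ 2 + (ω - ωp i) ^ 2) / 2 - Real.log ω))
          atTop (nhds 0) := by
        have := tendsto_finset_sum (Finset.univ : Finset (Fin n))
          (fun i _ => st17_log_asymp (σ0 - σp i) (ωp i) (htp0 i))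
        simpa using this
      have hzero := h1.sub h2
      rw [sub_zero] at hzero
      have hC : Tendsto (fun ω : ℝ => ((m : ℝ) - n) * Real.log ω) atTop atBot := by
        have hlt : ((m : ℝ) - n) < 0 := by
          have : (m : ℝ) < n := by exact_mod_cast hmn
          linarith
        exact Real.tendsto_log_atTop.const_mul_atTop_of_neg hlt
      have hcomb := hzero.add_atBot hC
      refine hcomb.congr fun ω => ?_
      simp only [Finset.sum_sub_distrib, Finset.sum_const, Finset.card_univ,
        Fintype.card_fin, nsmul_eq_mul]
      ring
    have hL : Tendsto (fun ω : ℝ => Real.log |kG| +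
        ((∑ k : Fin m, Real.log ((σ0 - σz k) ^ 2 + (ω - ωz k) ^ 2) / 2)
          - ∑ i : Fin n, Real.log ((σ0 - σp i) ^ 2 + (ω - ωp i) ^ 2) / 2)) atTop atBot :=
      tendsto_atBot_add_const_left _ _ hE
    have hfin := hL.const_mul_atBot_of_neg (inv_neg''.mpr hσ0)
    refine hfin.congr fun ω => ?_
    rw [hHf ω]
    field_simp
    ring
  -- derivative formula
  have hφeq : φ = fun ω : ℝ =>
      ((∑ k : Fin m, Real.arctan ((ω - ωz k) / (σ0 - σz k)))
        - ∑ i : Fin n, Real.arctan ((ω - ωp i) / (σ0 - σp i)))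
      - ω * ((Real.log |kG| + (∑ k : Fin m, Real.log ((σ0 - σz k) ^ 2 + (ω - ωz k) ^ 2) / 2)
        - ∑ i : Fin n, Real.log ((σ0 - σp i) ^ 2 + (ω - ωp i) ^ 2) / 2) / σ0) := by
    funext ω
    rw [hφ, hΘ, hHf]
  have hderiv : ∀ ω : ℝ, deriv φ ω =
      ((∑ k : Fin m, (σ0 - σz k) / ((σ0 - σz k) ^ 2 + (ω - ωz k) ^ 2))
        - ∑ i : Fin n, (σ0 - σp i) / ((σ0 - σp i) ^ 2 + (ω - ωp i) ^ 2))
      - (H ω + ω * (((∑ k : Fin m, (ω - ωz k) / ((σ0 - σz k) ^ 2 + (ω - ωz k) ^ 2))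
        - ∑ i : Fin n, (ω - ωp i) / ((σ0 - σp i) ^ 2 + (ω - ωp i) ^ 2)) / σ0)) := by
    intro ω
    have hΘd : HasDerivAt (fun x : ℝ =>
        (∑ k : Fin m, Real.arctan ((x - ωz k) / (σ0 - σz k)))
          - ∑ i : Fin n, Real.arctan ((x - ωp i) / (σ0 - σp i)))
        ((∑ k : Fin m, (σ0 - σz k) / ((σ0 - σz k) ^ 2 + (ω - ωz k) ^ 2))
          - ∑ i : Fin n, (σ0 - σp i) / ((σ0 - σp i) ^ 2 + (ω - ωp i) ^ 2)) ω :=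
      (HasDerivAt.fun_sum fun k _ => st17_hasDerivAt_arctan _ _ ω (htz0 k)).sub
        (HasDerivAt.fun_sum fun i _ => st17_hasDerivAt_arctan _ _ ω (htp0 i))
    have hHd : HasDerivAt (fun x : ℝ =>
        (Real.log |kG| + (∑ k : Fin m, Real.log ((σ0 - σz k) ^ 2 + (x - ωz k) ^ 2) / 2)
          - ∑ i : Fin n, Real.log ((σ0 - σp i) ^ 2 + (x - ωp i) ^ 2) / 2) / σ0)
        (((∑ k : Fin m, (ω - ωz k) / ((σ0 - σz k) ^ 2 + (ω - ωz k) ^ 2))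
          - ∑ i : Fin n, (ω - ωp i) / ((σ0 - σp i) ^ 2 + (ω - ωp i) ^ 2)) / σ0) ω :=
      (((HasDerivAt.fun_sum fun k _ => st17_hasDerivAt_halflog _ _ ω (htz0 k)).const_add
          (Real.log |kG|)).sub
        (HasDerivAt.fun_sum fun i _ => st17_hasDerivAt_halflog _ _ ω (htp0 i))).div_const σ0
    have hmul := (hasDerivAt_id' (x := ω)).fun_mul hHd
    have hfull := hΘd.fun_sub hmul
    rw [hφeq, hfull.deriv, hHf ω]
    ring
  -- Part 2 : σ0 * deriv φ tends to atTop
  have hT : Tendsto (fun ω : ℝ => σ0 * deriv φ ω) atTop atTop := by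
    have h1 : Tendsto (fun ω : ℝ => σ0 *
        ((∑ k : Fin m, (σ0 - σz k) / ((σ0 - σz k) ^ 2 + (ω - ωz k) ^ 2))
          - ∑ i : Fin n, (σ0 - σp i) / ((σ0 - σp i) ^ 2 + (ω - ωp i) ^ 2))) atTop (nhds 0) := by
      have a := tendsto_finset_sum (Finset.univ : Finset (Fin m))
        (fun k _ => st17_frac_lim (σ0 - σz k) (ωz k) (htz0 k))
      have b := tendsto_finset_sum (Finset.univ : Finset (Fin n))
        (fun i _ => st17_frac_lim (σ0 - σp i) (ωp i) (htp0 i))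
      have := (a.sub b).const_mul σ0
      simpa using this
    have h2 : Tendsto (fun ω : ℝ => (-σ0) * H ω) atTop atTop :=
      hHtends.const_mul_atTop (by linarith)
    have h3 : Tendsto (fun ω : ℝ =>
        -(ω * ((∑ k : Fin m, (ω - ωz k) / ((σ0 - σz k) ^ 2 + (ω - ωz k) ^ 2))
          - ∑ i : Fin n, (ω - ωp i) / ((σ0 - σp i) ^ 2 + (ω - ωp i) ^ 2))))
        atTop (nhds (-((m : ℝ) - n))) := by
      have a : Tendsto (fun ω : ℝ =>
          ∑ k : Fin m, ω * (ω - ωz k) / ((σ0 - σz k) ^ 2 + (ω - ωz k) ^ 2))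
          atTop (nhds (m : ℝ)) := by
        have := tendsto_finset_sum (Finset.univ : Finset (Fin m))
          (fun k _ => st17_omega_frac_lim (σ0 - σz k) (ωz k) (htz0 k))
        simpa using this
      have b : Tendsto (fun ω : ℝ =>
          ∑ i : Fin n, ω * (ω - ωp i) / ((σ0 - σp i) ^ 2 + (ω - ωp i) ^ 2))
          atTop (nhds (n : ℝ)) := by
        have := tendsto_finset_sum (Finset.univ : Finset (Fin n))
          (fun i _ => st17_omega_frac_lim (σ0 - σp i) (ωp i) (htp0 i))
        simpa using this
      have hcomb := (a.sub b).neg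
      refine hcomb.congr fun ω => ?_
      congr 1
      rw [mul_sub, Finset.mul_sum, Finset.mul_sum]
      congr 1
      · exact Finset.sum_congr rfl fun k _ => by ring
      · exact Finset.sum_congr rfl fun i _ => by ring
    have hcomb := h1.add_atTop (h2.atTop_add h3)
    refine hcomb.congr fun ω => ?_
    have key : ∀ A S Hv : ℝ,
        σ0 * A + (-σ0 * Hv + -(ω * S)) = σ0 * (A - (Hv + ω * (S / σ0))) := by
      intro A S Hv
      have h0 : σ0 ≠ 0 := hσ0.ne
      field_simp
      ring
    rw [hderiv ω]
    exact key _ _ _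
  refine ⟨hHtends, hT, ?_⟩
  obtain ⟨Ω, hΩ⟩ := (eventually_atTop).mp (hT.eventually (eventually_gt_atTop 0))
  refine ⟨Ω, fun ω hω => ?_⟩
  have h1 := hΩ ω hω.le
  by_contra h
  push_neg at h
  nlinarith
end

section
/- (Imaginary-axis crossing direction.) Let ω₀ > 0 be such that iω₀ is neither a zero nor a pole of G (z_k ≠ iω₀ for all k and p_i ≠ iω₀ for all i), and let h₀ be a real number with 1 + G(iω₀)·e^{−i·h₀·ω₀} = 0 and G′(iω₀) − h₀·G(iω₀) ≠ 0. Let H_im denote the function ω ↦ ln|G(iω)|, which is differentiable at ω₀. Then the crossing direction satisfies sign( Re( iω₀·( G′(iω₀)/G(iω₀) − h₀ )^{−1} ) ) = sign( −H_im′(ω₀) ). -/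
open Complex Real Filter Finset Set

private lemma sign_aux {c d x : ℝ} (hc : 0 < c) (hd : 0 < d) :
    Real.sign (c * x / d) = Real.sign x := by
  rcases lt_trichotomy x 0 with h | h | h
  · rw [Real.sign_of_neg h,
      Real.sign_of_neg (div_neg_of_neg_of_pos (mul_neg_of_pos_of_neg hc h) hd)]
  · simp [h]
  · rw [Real.sign_of_pos h, Real.sign_of_pos (div_pos (mul_pos hc h) hd)]

theorem stmt_19
    (m n : ℕ) (kG : ℝ) (hkG : kG ≠ 0)
    (z : Fin m → ℂ) (p : Fin n → ℂ)
    (G : ℂ → ℂ)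
    (hG : ∀ s : ℂ, G s = (kG : ℂ) * (∏ k : Fin m, (s - z k)) / (∏ i : Fin n, (s - p i)))
    (Him : ℝ → ℝ)
    (hHim : ∀ ω : ℝ, Him ω = Real.log ‖G ((ω : ℂ) * Complex.I)‖)
    (ω0 : ℝ) (hω0 : 0 < ω0)
    (hz : ∀ k, z k ≠ (ω0 : ℂ) * Complex.I) (hp : ∀ i, p i ≠ (ω0 : ℂ) * Complex.I)
    (h0 : ℝ)
    (hchar : 1 + G ((ω0 : ℂ) * Complex.I) *
        Complex.exp (-(Complex.I * (h0 : ℂ) * (ω0 : ℂ))) = 0)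
    (hsimple : deriv G ((ω0 : ℂ) * Complex.I) - (h0 : ℂ) * G ((ω0 : ℂ) * Complex.I) ≠ 0)
    : DifferentiableAt ℝ Him ω0 ∧
      Real.sign
          (((ω0 : ℂ) * Complex.I *
              (deriv G ((ω0 : ℂ) * Complex.I) / G ((ω0 : ℂ) * Complex.I) - (h0 : ℂ))⁻¹).re) =
        Real.sign (-(deriv Him ω0)) := by
  set s0 : ℂ := (ω0 : ℂ) * Complex.I with hs0
  -- G is nonzero at s0
  have hg : G s0 ≠ 0 := by
    intro h
    rw [h, zero_mul, add_zero] at hchar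
    exact one_ne_zero hchar
  -- G is differentiable at s0
  have hden : (∏ i : Fin n, (s0 - p i)) ≠ 0 :=
    Finset.prod_ne_zero_iff.2 fun i _ => sub_ne_zero.2 (fun h => hp i h.symm)
  have hGdef : G = fun s => (kG : ℂ) * (∏ k : Fin m, (s - z k)) / (∏ i : Fin n, (s - p i)) :=
    funext hG
  have hGdiff : DifferentiableAt ℂ G s0 := by
    rw [hGdef]
    apply DifferentiableAt.div
    · fun_prop
    · fun_prop
    · exact hden
  set A : ℂ := deriv G s0 with hA
  have hGA : HasDerivAt G A s0 := hGdiff.hasDerivAt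
  set g : ℂ := G s0 with hgdef
  -- the curve u ω = G(iω)
  set u : ℝ → ℂ := fun ω => G ((ω : ℂ) * Complex.I) with hu
  have hline : HasDerivAt (fun ω : ℝ => (ω : ℂ) * Complex.I) Complex.I ω0 := by
    have := (hasDerivAt_id (ω0 : ℝ)).smul_const (Complex.I)
    simpa [Complex.real_smul] using this
  have hud : HasDerivAt u (A * Complex.I) ω0 := by
    have h := (hGA.hasFDerivAt.restrictScalars ℝ).comp_hasDerivAt ω0 hline
    rw [mul_comm]
    exact h
  have hre : HasDerivAt (fun ω => (u ω).re) ((A * Complex.I).re) ω0 :=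
    (Complex.reCLM.hasFDerivAt.comp_hasDerivAt ω0 hud)
  have him : HasDerivAt (fun ω => (u ω).im) ((A * Complex.I).im) ω0 :=
    (Complex.imCLM.hasFDerivAt.comp_hasDerivAt ω0 hud)
  set N : ℝ → ℝ := fun ω => (u ω).re ^ 2 + (u ω).im ^ 2 with hNdef
  have hu0 : u ω0 = g := rfl
  have hN0 : N ω0 ≠ 0 := by
    have : N ω0 = Complex.normSq g := by
      simp [hNdef, hu0, Complex.normSq_apply, sq]
    rw [this]
    exact (Complex.normSq_pos.2 hg).ne'
  have hNd : HasDerivAt N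
      (2 * g.re * (A * Complex.I).re + 2 * g.im * (A * Complex.I).im) ω0 := by
    have h1 : HasDerivAt (fun ω => (u ω).re ^ 2 + (u ω).im ^ 2) _ ω0 := (hre.pow 2).add (him.pow 2)
    simpa [hu0, mul_comm, mul_assoc, mul_left_comm] using h1
  have hHimEq : Him = fun ω => Real.log (N ω) / 2 := by
    funext ω
    rw [hHim ω]
    have : ‖G ((ω : ℂ) * Complex.I)‖ = Real.sqrt (N ω) := by
      rw [Complex.norm_def, Complex.normSq_apply]
      congr 1
      simp [hNdef, hu, sq]
    rw [this, Real.log_sqrt (by positivity)]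
  have hHimd : HasDerivAt Him
      ((2 * g.re * (A * Complex.I).re + 2 * g.im * (A * Complex.I).im) / N ω0 / 2) ω0 := by
    rw [hHimEq]
    exact (hNd.log hN0).div_const 2
  refine ⟨hHimd.differentiableAt, ?_⟩
  rw [hHimd.deriv]
  -- now pure computation
  set w : ℂ := A / g - (h0 : ℂ) with hw
  have hgw : A - (h0 : ℂ) * g = g * w := by
    rw [hw]
    field_simp
  have hwne : w ≠ 0 := by
    intro h
    rw [h, mul_zero] at hgw
    exact hsimple (by rw [← hA, ← hgdef] at *; exact hgw)
  have hNw : 0 < Complex.normSq w := Complex.normSq_pos.2 hwne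
  -- LHS value
  have hLHS : ((ω0 : ℂ) * Complex.I * w⁻¹).re = ω0 * w.im / Complex.normSq w := by
    rw [Complex.mul_re, Complex.inv_re, Complex.inv_im]
    simp
    ring
  -- RHS value
  have hNω0 : N ω0 = Complex.normSq g := by
    simp [hNdef, hu0, Complex.normSq_apply, sq]
  have hRHS : -((2 * g.re * (A * Complex.I).re + 2 * g.im * (A * Complex.I).im) / N ω0 / 2)
      = w.im := by
    rw [hNω0, hw, Complex.sub_im, Complex.div_im]
    simp [Complex.mul_re, Complex.mul_im]
    have h2 : g.im ^ 2 + g.re ^ 2 ≠ 0 := by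
      intro h
      apply hg
      have h1 : g.im = 0 ∧ g.re = 0 := by
        constructor <;> nlinarith [sq_nonneg g.im, sq_nonneg g.re]
      exact Complex.ext h1.2 h1.1
    field_simp
    ring
  rw [hRHS, hLHS]
  exact sign_aux hω0 hNw
end
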